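/- arXiv:2404.07402 — 5 statements merged into one kernel-verified Lean document; each statement's English description precedes it below -/
import Mathlib

section
/- Let n ≥ 1. Let ρ_xy : ℝⁿ×ℝⁿ → [0,∞) and ρ_xzt : ℝⁿ×ℝⁿ×[0,1] → [0,∞) be integrable (with respect to Lebesgue measure), ρ₀ : ℝⁿ → [0,∞) integrable, and Q : ℝⁿ×[0,1] → [0,∞) measurable. Suppose there exist measurable f : ℝⁿ → [0,∞) and Λ : ℝⁿ×[0,1] → [0,∞) such that the couplings π*_xy(x,y) := ρ_xy(x,y) f(x) and π*_xzt(x,z,t) := ρ_xzt(x,z,t) f(x) Λ(z,t) satisfy the constraints ∫_{ℝⁿ} π*_xy(x,y) dy + ∫_0^1 ∫_{ℝⁿ} π*_xzt(x,z,t) dz dt = ρ₀(x) for a.e. x, and ∫_{ℝⁿ} π*_xzt(x,z,t) dx = Q(z,t) for a.e. (z,t), and suppose that D(π*_xy‖ρ_xy) + D(π*_xzt‖ρ_xzt) < ∞, ∫_{ℝⁿ} ρ₀(x) |log f(x)| dx < ∞, and ∫_0^1 ∫_{ℝⁿ} Q(z,t) |log Λ(z,t)| dz dt < ∞. Then for every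 pair of nonnegative measurable functions π_xy on ℝⁿ×ℝⁿ and π_xzt on ℝⁿ×ℝⁿ×[0,1] satisfying the same two constraints, vanishing a.e. on the sets where ρ_xy respectively ρ_xzt vanish, one has D(π_xy‖ρ_xy) + D(π_xzt‖ρ_xzt) ≥ D(π*_xy‖ρ_xy) + D(π*_xzt‖ρ_xzt). -/
open MeasureTheory
open scoped ENNReal NNReal

private lemma gibbs_pt {a b : ℝ} (ha : 0 ≤ a) (hb : 0 ≤ b) (h : b = 0 → a = 0) :
    a - b ≤ a * Real.log (a / b) := by
  rcases ha.eq_or_lt with ha0 | ha0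
  · simp only [← ha0, zero_mul, zero_sub]
    linarith
  · have hb0 : 0 < b := hb.lt_of_ne fun e => by simp [h e.symm] at ha0
    have h1 : Real.log (b / a) ≤ b / a - 1 := Real.log_le_sub_one_of_pos (by positivity)
    have h2 : Real.log (a / b) = - Real.log (b / a) := by
      rw [← Real.log_inv]
      congr 1
      field_simp
    have h3 : 1 - b / a ≤ Real.log (a / b) := by rw [h2]; linarith
    calc a - b = a * (1 - b / a) := by field_simp
      _ ≤ a * Real.log (a / b) := mul_le_mul_of_nonneg_left h3 ha0.le

private lemma integrable_of_ent {α : Type*} [MeasurableSpace α] {m : Measure α}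
    {p q : α → ℝ} (hp : AEStronglyMeasurable p m) (hpn : ∀ x, 0 ≤ p x) (hqn : ∀ x, 0 ≤ q x)
    (hq : Integrable q m) (hvan : ∀ᵐ x ∂m, q x = 0 → p x = 0)
    (hent : Integrable (fun x => p x * Real.log (p x / q x)) m) :
    Integrable p m := by
  refine (hent.add hq).mono' hp ?_
  filter_upwards [hvan] with x hv
  have := gibbs_pt (hpn x) (hqn x) hv
  rw [Real.norm_eq_abs, abs_of_nonneg (hpn x)]
  simp only [Pi.add_apply]
  linarith

private lemma aux_int_fst {α β : Type*} [MeasurableSpace α] [MeasurableSpace β]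
    {μ : Measure α} {ν : Measure β} [SigmaFinite μ] [SigmaFinite ν]
    {F : α × β → ℝ} {g ρ : α → ℝ}
    (hF : Integrable F (μ.prod ν)) (hFnn : ∀ p, 0 ≤ F p)
    (hg : AEStronglyMeasurable g μ)
    (hbound : ∀ᵐ x ∂μ, (∫ y, F (x, y) ∂ν) ≤ ρ x)
    (hρg : Integrable (fun x => ρ x * |g x|) μ) :
    Integrable (fun p => F p * g p.1) (μ.prod ν) := by
  have hgm : AEStronglyMeasurable (fun p : α × β => g p.1) (μ.prod ν) :=
    hg.comp_quasiMeasurePreserving Measure.quasiMeasurePreserving_fst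
  refine ⟨hF.1.mul hgm, ?_⟩
  have key : (∫⁻ p, (‖F p * g p.1‖₊ : ℝ≥0∞) ∂(μ.prod ν)) < ⊤ := by
    calc ∫⁻ p, (‖F p * g p.1‖₊ : ℝ≥0∞) ∂(μ.prod ν)
        = ∫⁻ p, (‖F p‖₊ : ℝ≥0∞) * ‖g p.1‖₊ ∂(μ.prod ν) := by
          simp_rw [nnnorm_mul, ENNReal.coe_mul]
      _ = ∫⁻ x, ∫⁻ y, (‖F (x, y)‖₊ : ℝ≥0∞) * ‖g x‖₊ ∂ν ∂μ :=
          lintegral_prod _ (hF.1.enorm.mul hgm.enorm)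
      _ = ∫⁻ x, (∫⁻ y, (‖F (x, y)‖₊ : ℝ≥0∞) ∂ν) * ‖g x‖₊ ∂μ := by
          congr 1
          funext x
          exact lintegral_mul_const' _ _ ENNReal.coe_ne_top
      _ ≤ ∫⁻ x, ENNReal.ofReal (ρ x) * ‖g x‖₊ ∂μ := by
          refine lintegral_mono_ae ?_
          filter_upwards [hbound, hF.prod_right_ae] with x hb hi
          have h1 : ∫⁻ y, (‖F (x, y)‖₊ : ℝ≥0∞) ∂ν = ENNReal.ofReal (∫ y, F (x, y) ∂ν) := by
            rw [ofReal_integral_eq_lintegral_ofReal hi (Filter.Eventually.of_forall fun y => hFnn _)]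
            congr 1
            funext y
            exact Real.enorm_eq_ofReal (hFnn _)
          rw [h1]
          exact mul_le_mul_left (ENNReal.ofReal_le_ofReal hb) _
      _ ≤ ∫⁻ x, (‖ρ x * |g x|‖₊ : ℝ≥0∞) ∂μ := by
          refine lintegral_mono fun x => ?_
          rw [nnnorm_mul, ENNReal.coe_mul, Real.nnnorm_abs]
          exact mul_le_mul_left (Real.ofReal_le_enorm _) _
      _ < ⊤ := hρg.2
  exact key

private lemma aux_val_fst {α β : Type*} [MeasurableSpace α] [MeasurableSpace β]
    {μ : Measure α} {ν : Measure β} [SigmaFinite μ] [SigmaFinite ν]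
    {F : α × β → ℝ} {g : α → ℝ}
    (hint : Integrable (fun p => F p * g p.1) (μ.prod ν)) :
    ∫ p, F p * g p.1 ∂(μ.prod ν) = ∫ x, (∫ y, F (x, y) ∂ν) * g x ∂μ := by
  rw [integral_prod _ hint]
  simp_rw [integral_mul_const]

private lemma restrict_snd_prod {α β : Type*} [MeasureSpace α] [MeasureSpace β]
    [SFinite (volume : Measure α)] [SFinite (volume : Measure β)] (t : Set β) :
    (volume : Measure (α × β)).restrict {p | p.2 ∈ t} =
      (volume : Measure α).prod ((volume : Measure β).restrict t) := by
  have h : {p : α × β | p.2 ∈ t} = Set.univ ×ˢ t := by ext p; simp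
  rw [h, Measure.volume_eq_prod, ← Measure.prod_restrict, Measure.restrict_univ]

private lemma slice_iterated {E : Type*} [MeasureSpace E] [SigmaFinite (volume : Measure E)]
    {F : E × ℝ → ℝ}
    (hF : Integrable F ((volume : Measure E).prod ((volume : Measure ℝ).restrict (Set.Icc 0 1)))) :
    ∫ q, F q ∂((volume : Measure E).prod ((volume : Measure ℝ).restrict (Set.Icc 0 1))) =
      ∫ t in Set.Icc (0:ℝ) 1, ∫ z, F (z, t) := by
  rw [integral_prod _ hF]
  exact integral_integral_swap (f := fun z t => F (z, t)) hF


/-- Relative entropy `D(p‖q) = ∫ p log(p/q) dm` between nonnegative densities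
(with the convention `0 log(0/0) = 0`, which holds in Lean since `Real.log 0 = 0`
and `0/0 = 0`). -/
noncomputable def dEnt {E : Type*} [MeasurableSpace E] (m : Measure E) (p q : E → ℝ) : ℝ :=
  ∫ x, p x * Real.log (p x / q x) ∂m

set_option maxHeartbeats 2000000 in
/-- Optimality certificate for Problem 2: couplings of the multiplicative form
`π*_xy(x,y) = ρ_xy(x,y) f(x)` and `π*_xzt(x,z,t) = ρ_xzt(x,z,t) f(x) Λ(z,t)` dictated by the
first-order Lagrangian conditions minimize `D(π_xy‖ρ_xy) + D(π_xzt‖ρ_xzt)` among all couplings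
matching the initial marginal `ρ₀` and the spatio-temporal killing marginal `Q`.
(A candidate pair with non-integrable relative-entropy integrand has `D = +∞` and satisfies
the inequality trivially; hence the integrability premise in the conclusion.) -/
theorem schroedinger_couplings_optimality
    (n : ℕ) (hn : 1 ≤ n)
    (ρxy : (Fin n → ℝ) × (Fin n → ℝ) → ℝ)
    (ρxzt : (Fin n → ℝ) × (Fin n → ℝ) × ℝ → ℝ)
    (ρ₀ : (Fin n → ℝ) → ℝ) (Q : (Fin n → ℝ) × ℝ → ℝ)
    -- the restriction of Lebesgue measure to the time window `[0,1]`: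
    (mzt : Measure ((Fin n → ℝ) × (Fin n → ℝ) × ℝ))
    (hmzt : mzt = (volume : Measure ((Fin n → ℝ) × (Fin n → ℝ) × ℝ)).restrict
      {p | p.2.2 ∈ Set.Icc (0:ℝ) 1})
    (mQ : Measure ((Fin n → ℝ) × ℝ))
    (hmQ : mQ = (volume : Measure ((Fin n → ℝ) × ℝ)).restrict {p | p.2 ∈ Set.Icc (0:ℝ) 1})
    (hρxy_nonneg : ∀ p, 0 ≤ ρxy p) (hρxzt_nonneg : ∀ p, 0 ≤ ρxzt p)
    (hρ₀_nonneg : ∀ x, 0 ≤ ρ₀ x) (hQ_nonneg : ∀ p, 0 ≤ Q p)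
    (hρxy_int : Integrable ρxy volume) (hρxzt_int : Integrable ρxzt mzt)
    (hρ₀_int : Integrable ρ₀ volume) (hQ_meas : Measurable Q)
    (f : (Fin n → ℝ) → ℝ) (Λ : (Fin n → ℝ) × ℝ → ℝ)
    (hf_meas : Measurable f) (hf_nonneg : ∀ x, 0 ≤ f x)
    (hΛ_meas : Measurable Λ) (hΛ_nonneg : ∀ p, 0 ≤ Λ p)
    -- the optimal couplings:
    (πxy : (Fin n → ℝ) × (Fin n → ℝ) → ℝ)
    (πxzt : (Fin n → ℝ) × (Fin n → ℝ) × ℝ → ℝ)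
    (hπxy : ∀ p, πxy p = ρxy p * f p.1)
    (hπxzt : ∀ p, πxzt p = ρxzt p * f p.1 * Λ (p.2.1, p.2.2))
    -- the optimal couplings satisfy the two marginal constraints:
    (hC1 : ∀ᵐ x ∂(volume : Measure (Fin n → ℝ)),
      (∫ y, πxy (x, y)) + ∫ t in Set.Icc (0:ℝ) 1, ∫ z, πxzt (x, z, t) = ρ₀ x)
    (hC2 : ∀ᵐ zt ∂mQ, (∫ x, πxzt (x, zt.1, zt.2)) = Q zt)
    -- finiteness: `D(π*_xy‖ρ_xy) + D(π*_xzt‖ρ_xzt) < ∞`,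
    -- `∫ ρ₀ |log f| < ∞` and `∫∫ Q |log Λ| < ∞`:
    (hπxy_ent : Integrable (fun p => πxy p * Real.log (πxy p / ρxy p)) volume)
    (hπxzt_ent : Integrable (fun p => πxzt p * Real.log (πxzt p / ρxzt p)) mzt)
    (hρ₀f : Integrable (fun x => ρ₀ x * |Real.log (f x)|) volume)
    (hQΛ : Integrable (fun zt => Q zt * |Real.log (Λ zt)|) mQ) :
    -- conclusion: optimality among all feasible couplings
    ∀ (σxy : (Fin n → ℝ) × (Fin n → ℝ) → ℝ)
      (σxzt : (Fin n → ℝ) × (Fin n → ℝ) × ℝ → ℝ),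
      Measurable σxy → Measurable σxzt →
      (∀ p, 0 ≤ σxy p) → (∀ p, 0 ≤ σxzt p) →
      (∀ᵐ p ∂(volume : Measure ((Fin n → ℝ) × (Fin n → ℝ))), ρxy p = 0 → σxy p = 0) →
      (∀ᵐ p ∂mzt, ρxzt p = 0 → σxzt p = 0) →
      (∀ᵐ x ∂(volume : Measure (Fin n → ℝ)),
        (∫ y, σxy (x, y)) + ∫ t in Set.Icc (0:ℝ) 1, ∫ z, σxzt (x, z, t) = ρ₀ x) →
      (∀ᵐ zt ∂mQ, (∫ x, σxzt (x, zt.1, zt.2)) = Q zt) →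
      Integrable (fun p => σxy p * Real.log (σxy p / ρxy p)) volume →
      Integrable (fun p => σxzt p * Real.log (σxzt p / ρxzt p)) mzt →
      dEnt volume πxy ρxy + dEnt mzt πxzt ρxzt ≤
        dEnt volume σxy ρxy + dEnt mzt σxzt ρxzt := by
  intro σxy σxzt hσxy_meas hσxzt_meas hσxy_nn hσxzt_nn hσxy_van hσxzt_van hD1 hD2 hσxy_ent hσxzt_ent
  have hmQ' : mQ = (volume : Measure (Fin n → ℝ)).prod ((volume : Measure ℝ).restrict (Set.Icc 0 1)) := by
    rw [hmQ]; exact restrict_snd_prod _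
  have hmzt' : mzt = (volume : Measure (Fin n → ℝ)).prod mQ := by
    rw [hmzt, hmQ]
    exact restrict_snd_prod {q : (Fin n → ℝ) × ℝ | q.2 ∈ Set.Icc (0:ℝ) 1}
  have hvol2 : (volume : Measure ((Fin n → ℝ) × (Fin n → ℝ))) =
      (volume : Measure (Fin n → ℝ)).prod (volume : Measure (Fin n → ℝ)) :=
    Measure.volume_eq_prod _ _
  haveI hmQsf : SigmaFinite mQ := by rw [hmQ']; infer_instance
  rw [hvol2] at hρxy_int hπxy_ent hσxy_ent hσxy_van
  rw [hmzt'] at hρxzt_int hπxzt_ent hσxzt_ent hσxzt_van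
  -- basic facts about the optimal couplings
  have hπxy_eq : πxy = fun p => ρxy p * f p.1 := funext hπxy
  have hπxzt' : ∀ p, πxzt p = ρxzt p * f p.1 * Λ p.2 := fun p => hπxzt p
  have hπxzt_eq : πxzt = fun p => ρxzt p * f p.1 * Λ p.2 := funext hπxzt'
  have hπxy_nn : ∀ p, 0 ≤ πxy p := fun p => by
    rw [hπxy p]; exact mul_nonneg (hρxy_nonneg p) (hf_nonneg _)
  have hπxzt_nn : ∀ p, 0 ≤ πxzt p := fun p => by
    rw [hπxzt' p]; exact mul_nonneg (mul_nonneg (hρxzt_nonneg p) (hf_nonneg _)) (hΛ_nonneg _)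
  have hπxy_aesm : AEStronglyMeasurable πxy
      ((volume : Measure (Fin n → ℝ)).prod (volume : Measure (Fin n → ℝ))) := by
    rw [hπxy_eq]
    exact hρxy_int.1.mul ((hf_meas.comp measurable_fst).aestronglyMeasurable)
  have hπxzt_aesm : AEStronglyMeasurable πxzt ((volume : Measure (Fin n → ℝ)).prod mQ) := by
    rw [hπxzt_eq]
    exact (hρxzt_int.1.mul ((hf_meas.comp measurable_fst).aestronglyMeasurable)).mul
      ((hΛ_meas.comp measurable_snd).aestronglyMeasurable)
  -- integrability of all four couplings
  have hσxy_int : Integrable σxy _ :=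
    integrable_of_ent hσxy_meas.aestronglyMeasurable hσxy_nn hρxy_nonneg hρxy_int hσxy_van hσxy_ent
  have hσxzt_int : Integrable σxzt _ :=
    integrable_of_ent hσxzt_meas.aestronglyMeasurable hσxzt_nn hρxzt_nonneg hρxzt_int hσxzt_van hσxzt_ent
  have hπxy_int : Integrable πxy _ :=
    integrable_of_ent hπxy_aesm hπxy_nn hρxy_nonneg hρxy_int
      (Filter.Eventually.of_forall fun p hp => by rw [hπxy p, hp, zero_mul]) hπxy_ent
  have hπxzt_int : Integrable πxzt _ :=
    integrable_of_ent hπxzt_aesm hπxzt_nn hρxzt_nonneg hρxzt_int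
      (Filter.Eventually.of_forall fun p hp => by rw [hπxzt' p, hp, zero_mul, zero_mul]) hπxzt_ent
  -- constraints in marginal form
  have hD1' : ∀ᵐ x ∂(volume : Measure (Fin n → ℝ)),
      (∫ y, σxy (x, y)) + (∫ q, σxzt (x, q) ∂mQ) = ρ₀ x := by
    filter_upwards [hD1, hσxzt_int.prod_right_ae] with x hx hi
    rw [← hx]
    congr 1
    rw [hmQ'] at hi ⊢
    exact slice_iterated hi
  have hC1' : ∀ᵐ x ∂(volume : Measure (Fin n → ℝ)),
      (∫ y, πxy (x, y)) + (∫ q, πxzt (x, q) ∂mQ) = ρ₀ x := by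
    filter_upwards [hC1, hπxzt_int.prod_right_ae] with x hx hi
    rw [← hx]
    congr 1
    rw [hmQ'] at hi ⊢
    exact slice_iterated hi
  -- nonnegativity and bounds on marginals
  have hM1σ_nn : ∀ x, 0 ≤ ∫ y, σxy (x, y) := fun x => integral_nonneg fun y => hσxy_nn _
  have hM2σ_nn : ∀ x, 0 ≤ ∫ q, σxzt (x, q) ∂mQ := fun x => integral_nonneg fun q => hσxzt_nn _
  have hM1π_nn : ∀ x, 0 ≤ ∫ y, πxy (x, y) := fun x => integral_nonneg fun y => hπxy_nn _
  have hM2π_nn : ∀ x, 0 ≤ ∫ q, πxzt (x, q) ∂mQ := fun x => integral_nonneg fun q => hπxzt_nn _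
  have hbσ1 : ∀ᵐ x ∂(volume : Measure (Fin n → ℝ)), (∫ y, σxy (x, y)) ≤ ρ₀ x := by
    filter_upwards [hD1'] with x hx; linarith [hM2σ_nn x]
  have hbσ2 : ∀ᵐ x ∂(volume : Measure (Fin n → ℝ)), (∫ q, σxzt (x, q) ∂mQ) ≤ ρ₀ x := by
    filter_upwards [hD1'] with x hx; linarith [hM1σ_nn x]
  have hbπ1 : ∀ᵐ x ∂(volume : Measure (Fin n → ℝ)), (∫ y, πxy (x, y)) ≤ ρ₀ x := by
    filter_upwards [hC1'] with x hx; linarith [hM2π_nn x]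
  have hbπ2 : ∀ᵐ x ∂(volume : Measure (Fin n → ℝ)), (∫ q, πxzt (x, q) ∂mQ) ≤ ρ₀ x := by
    filter_upwards [hC1'] with x hx; linarith [hM1π_nn x]
  have hbσ3 : ∀ᵐ zt ∂mQ, (∫ x, σxzt (x, zt)) ≤ Q zt := by
    filter_upwards [hD2] with zt h; exact le_of_eq h
  have hbπ3 : ∀ᵐ zt ∂mQ, (∫ x, πxzt (x, zt)) ≤ Q zt := by
    filter_upwards [hC2] with zt h; exact le_of_eq h
  -- vanishing of ρ₀ and Q where the multipliers vanish
  have hf0 : ∀ᵐ x ∂(volume : Measure (Fin n → ℝ)), f x = 0 → ρ₀ x = 0 := by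
    filter_upwards [hC1] with x hx hfx
    rw [← hx]
    simp [hπxy, hπxzt, hfx]
  have hΛ0Q : ∀ᵐ zt ∂mQ, Λ zt = 0 → Q zt = 0 := by
    filter_upwards [hC2] with zt h hΛ0
    rw [← h]
    simp [hπxzt, Prod.mk.eta, hΛ0]
  -- vanishing of σ's where the multipliers vanish
  have hσxy_f0 : ∀ᵐ p ∂((volume : Measure (Fin n → ℝ)).prod (volume : Measure (Fin n → ℝ))),
      f p.1 = 0 → σxy p = 0 := by
    have hs : MeasurableSet {p : (Fin n → ℝ) × (Fin n → ℝ) | f p.1 = 0 → σxy p = 0} := by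
      have h : {p : (Fin n → ℝ) × (Fin n → ℝ) | f p.1 = 0 → σxy p = 0}
          = {p : (Fin n → ℝ) × (Fin n → ℝ) | f p.1 = 0}ᶜ ∪ {p | σxy p = 0} := by
        ext p; simp [imp_iff_not_or]
      rw [h]
      exact (((hf_meas.comp measurable_fst) (measurableSet_singleton 0)).compl).union
        (hσxy_meas (measurableSet_singleton 0))
    rw [Measure.ae_prod_iff_ae_ae hs]
    filter_upwards [hD1', hf0, hσxy_int.prod_right_ae] with x hx hfx hix
    by_cases hf' : f x = 0
    · have hzero : ∫ y, σxy (x, y) = 0 := by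
        have := hfx hf'
        have := hM2σ_nn x
        linarith [hM1σ_nn x]
      have hae := (integral_eq_zero_iff_of_nonneg_ae
        (Filter.Eventually.of_forall fun y => hσxy_nn _) hix).mp hzero
      filter_upwards [hae] with y hy _
      exact hy
    · exact Filter.Eventually.of_forall fun y h => absurd h hf'
  have hσxzt_f0 : ∀ᵐ p ∂((volume : Measure (Fin n → ℝ)).prod mQ),
      f p.1 = 0 → σxzt p = 0 := by
    have hs : MeasurableSet {p : (Fin n → ℝ) × ((Fin n → ℝ) × ℝ) | f p.1 = 0 → σxzt p = 0} := by
      have h : {p : (Fin n → ℝ) × ((Fin n → ℝ) × ℝ) | f p.1 = 0 → σxzt p = 0}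
          = {p : (Fin n → ℝ) × ((Fin n → ℝ) × ℝ) | f p.1 = 0}ᶜ ∪ {p | σxzt p = 0} := by
        ext p; simp [imp_iff_not_or]
      rw [h]
      exact (((hf_meas.comp measurable_fst) (measurableSet_singleton 0)).compl).union
        (hσxzt_meas (measurableSet_singleton 0))
    rw [Measure.ae_prod_iff_ae_ae hs]
    filter_upwards [hD1', hf0, hσxzt_int.prod_right_ae] with x hx hfx hix
    by_cases hf' : f x = 0
    · have hzero : ∫ q, σxzt (x, q) ∂mQ = 0 := by
        have := hfx hf'
        have := hM1σ_nn x
        linarith [hM2σ_nn x]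
      have hae := (integral_eq_zero_iff_of_nonneg_ae
        (Filter.Eventually.of_forall fun q => hσxzt_nn _) hix).mp hzero
      filter_upwards [hae] with q hq _
      exact hq
    · exact Filter.Eventually.of_forall fun q h => absurd h hf'
  have hσxzt_Λ0 : ∀ᵐ p ∂((volume : Measure (Fin n → ℝ)).prod mQ),
      Λ p.2 = 0 → σxzt p = 0 := by
    have hs : MeasurableSet {p : (Fin n → ℝ) × ((Fin n → ℝ) × ℝ) | Λ p.2 = 0 → σxzt p = 0} := by
      have h : {p : (Fin n → ℝ) × ((Fin n → ℝ) × ℝ) | Λ p.2 = 0 → σxzt p = 0}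
          = {p : (Fin n → ℝ) × ((Fin n → ℝ) × ℝ) | Λ p.2 = 0}ᶜ ∪ {p | σxzt p = 0} := by
        ext p; simp [imp_iff_not_or]
      rw [h]
      exact (((hΛ_meas.comp measurable_snd) (measurableSet_singleton 0)).compl).union
        (hσxzt_meas (measurableSet_singleton 0))
    rw [Measure.ae_prod_iff_ae_ae hs, Measure.ae_ae_comm hs]
    filter_upwards [hD2, hσxzt_int.swap.prod_right_ae, hΛ0Q] with zt hq hi hΛQ
    by_cases hΛ' : Λ zt = 0
    · have hz : ∫ x, σxzt (x, zt) = 0 := by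
        rw [show (∫ x, σxzt (x, zt)) = Q zt from hq, hΛQ hΛ']
      have hae := (integral_eq_zero_iff_of_nonneg_ae
        (Filter.Eventually.of_forall fun x => hσxzt_nn _) hi).mp hz
      filter_upwards [hae] with x hx _
      exact hx
    · exact Filter.Eventually.of_forall fun x h => absurd h hΛ'
  -- integrability of the cross terms
  have hlogf_aesm : AEStronglyMeasurable (fun x => Real.log (f x))
      (volume : Measure (Fin n → ℝ)) :=
    (Real.measurable_log.comp hf_meas).aestronglyMeasurable
  have hlogΛ_aesm : AEStronglyMeasurable (fun zt => Real.log (Λ zt)) mQ :=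
    (Real.measurable_log.comp hΛ_meas).aestronglyMeasurable
  have hσg1 : Integrable (fun p => σxy p * Real.log (f p.1)) _ :=
    aux_int_fst hσxy_int hσxy_nn hlogf_aesm hbσ1 hρ₀f
  have hσg2 : Integrable (fun p => σxzt p * Real.log (f p.1)) _ :=
    aux_int_fst hσxzt_int hσxzt_nn hlogf_aesm hbσ2 hρ₀f
  have hπg1 : Integrable (fun p => πxy p * Real.log (f p.1)) _ :=
    aux_int_fst hπxy_int hπxy_nn hlogf_aesm hbπ1 hρ₀f
  have hπg2 : Integrable (fun p => πxzt p * Real.log (f p.1)) _ :=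
    aux_int_fst hπxzt_int hπxzt_nn hlogf_aesm hbπ2 hρ₀f
  have hσL' : Integrable
      (fun q : ((Fin n → ℝ) × ℝ) × (Fin n → ℝ) => σxzt (q.2, q.1) * Real.log (Λ q.1))
      (mQ.prod (volume : Measure (Fin n → ℝ))) :=
    aux_int_fst (F := fun q => σxzt (q.2, q.1)) hσxzt_int.swap (fun q => hσxzt_nn _)
      hlogΛ_aesm hbσ3 hQΛ
  have hπL' : Integrable
      (fun q : ((Fin n → ℝ) × ℝ) × (Fin n → ℝ) => πxzt (q.2, q.1) * Real.log (Λ q.1))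
      (mQ.prod (volume : Measure (Fin n → ℝ))) :=
    aux_int_fst (F := fun q => πxzt (q.2, q.1)) hπxzt_int.swap (fun q => hπxzt_nn _)
      hlogΛ_aesm hbπ3 hQΛ
  have hσL : Integrable (fun p => σxzt p * Real.log (Λ p.2))
      ((volume : Measure (Fin n → ℝ)).prod mQ) := hσL'.swap
  have hπL : Integrable (fun p => πxzt p * Real.log (Λ p.2))
      ((volume : Measure (Fin n → ℝ)).prod mQ) := hπL'.swap
  -- values of the cross terms
  have hT3σ : ∫ p, σxzt p * Real.log (Λ p.2) ∂((volume : Measure (Fin n → ℝ)).prod mQ)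
      = ∫ zt, Q zt * Real.log (Λ zt) ∂mQ := by
    rw [← integral_prod_swap (f := fun p => σxzt p * Real.log (Λ p.2))]
    have h1 : (∫ q, (fun p => σxzt p * Real.log (Λ p.2)) q.swap
        ∂(mQ.prod (volume : Measure (Fin n → ℝ))))
        = ∫ zt, (∫ x, σxzt (x, zt)) * Real.log (Λ zt) ∂mQ :=
      aux_val_fst (F := fun q : ((Fin n → ℝ) × ℝ) × (Fin n → ℝ) => σxzt (q.2, q.1))
        (g := fun zt => Real.log (Λ zt)) hσL'
    rw [h1]
    refine integral_congr_ae ?_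
    filter_upwards [hD2] with zt h
    rw [show (∫ x, σxzt (x, zt)) = Q zt from h]
  have hT3π : ∫ p, πxzt p * Real.log (Λ p.2) ∂((volume : Measure (Fin n → ℝ)).prod mQ)
      = ∫ zt, Q zt * Real.log (Λ zt) ∂mQ := by
    rw [← integral_prod_swap (f := fun p => πxzt p * Real.log (Λ p.2))]
    have h1 : (∫ q, (fun p => πxzt p * Real.log (Λ p.2)) q.swap
        ∂(mQ.prod (volume : Measure (Fin n → ℝ))))
        = ∫ zt, (∫ x, πxzt (x, zt)) * Real.log (Λ zt) ∂mQ :=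
      aux_val_fst (F := fun q : ((Fin n → ℝ) × ℝ) × (Fin n → ℝ) => πxzt (q.2, q.1))
        (g := fun zt => Real.log (Λ zt)) hπL'
    rw [h1]
    refine integral_congr_ae ?_
    filter_upwards [hC2] with zt h
    rw [show (∫ x, πxzt (x, zt)) = Q zt from h]
  -- marginal integrabilities
  have hM1σ_int : Integrable (fun x => ∫ y, σxy (x, y)) (volume : Measure (Fin n → ℝ)) :=
    hσxy_int.integral_prod_left
  have hM2σ_int : Integrable (fun x => ∫ q, σxzt (x, q) ∂mQ) (volume : Measure (Fin n → ℝ)) :=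
    hσxzt_int.integral_prod_left
  have hM1π_int : Integrable (fun x => ∫ y, πxy (x, y)) (volume : Measure (Fin n → ℝ)) :=
    hπxy_int.integral_prod_left
  have hM2π_int : Integrable (fun x => ∫ q, πxzt (x, q) ∂mQ) (volume : Measure (Fin n → ℝ)) :=
    hπxzt_int.integral_prod_left
  have hMg_int : ∀ (M : (Fin n → ℝ) → ℝ), Integrable M (volume : Measure (Fin n → ℝ)) →
      (∀ x, 0 ≤ M x) → (∀ᵐ x ∂(volume : Measure (Fin n → ℝ)), M x ≤ ρ₀ x) →
      Integrable (fun x => M x * Real.log (f x)) (volume : Measure (Fin n → ℝ)) := by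
    intro M hMint hMnn hMb
    refine hρ₀f.mono' (hMint.1.mul hlogf_aesm) ?_
    filter_upwards [hMb] with x hb
    rw [Real.norm_eq_abs, abs_mul, abs_of_nonneg (hMnn x)]
    exact mul_le_mul_of_nonneg_right hb (abs_nonneg _)
  have hM1σg_int := hMg_int _ hM1σ_int hM1σ_nn hbσ1
  have hM2σg_int := hMg_int _ hM2σ_int hM2σ_nn hbσ2
  have hM1πg_int := hMg_int _ hM1π_int hM1π_nn hbπ1
  have hM2πg_int := hMg_int _ hM2π_int hM2π_nn hbπ2
  -- sum of the f–cross terms equals ∫ ρ₀ log f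
  have hsumσ : (∫ x, (∫ y, σxy (x, y)) * Real.log (f x))
      + (∫ x, (∫ q, σxzt (x, q) ∂mQ) * Real.log (f x))
      = ∫ x, ρ₀ x * Real.log (f x) := by
    rw [← integral_add hM1σg_int hM2σg_int]
    refine integral_congr_ae ?_
    filter_upwards [hD1'] with x hx
    rw [← add_mul, hx]
  have hsumπ : (∫ x, (∫ y, πxy (x, y)) * Real.log (f x))
      + (∫ x, (∫ q, πxzt (x, q) ∂mQ) * Real.log (f x))
      = ∫ x, ρ₀ x * Real.log (f x) := by
    rw [← integral_add hM1πg_int hM2πg_int]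
    refine integral_congr_ae ?_
    filter_upwards [hC1'] with x hx
    rw [← add_mul, hx]
  -- total masses agree
  have hmassσ : (∫ p, σxy p ∂((volume : Measure (Fin n → ℝ)).prod (volume : Measure (Fin n → ℝ))))
      + (∫ p, σxzt p ∂((volume : Measure (Fin n → ℝ)).prod mQ)) = ∫ x, ρ₀ x := by
    rw [integral_prod _ hσxy_int, integral_prod _ hσxzt_int, ← integral_add hM1σ_int hM2σ_int]
    exact integral_congr_ae (by filter_upwards [hD1'] with x hx; exact hx)
  have hmassπ : (∫ p, πxy p ∂((volume : Measure (Fin n → ℝ)).prod (volume : Measure (Fin n → ℝ))))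
      + (∫ p, πxzt p ∂((volume : Measure (Fin n → ℝ)).prod mQ)) = ∫ x, ρ₀ x := by
    rw [integral_prod _ hπxy_int, integral_prod _ hπxzt_int, ← integral_add hM1π_int hM2π_int]
    exact integral_congr_ae (by filter_upwards [hC1'] with x hx; exact hx)
  -- the entropy of the optimal couplings in terms of cross terms
  have hid1 : ∀ p, πxy p * Real.log (πxy p / ρxy p) = πxy p * Real.log (f p.1) := by
    intro p
    by_cases hρ : ρxy p = 0
    · simp [hπxy p, hρ]
    · rw [hπxy p, mul_div_cancel_left₀ _ hρ]
  have hid2 : ∀ p, πxzt p * Real.log (πxzt p / ρxzt p)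
      = πxzt p * Real.log (f p.1) + πxzt p * Real.log (Λ p.2) := by
    intro p
    by_cases hρ : ρxzt p = 0
    · simp [hπxzt' p, hρ]
    · by_cases hf' : f p.1 = 0
      · simp [hπxzt' p, hf']
      · by_cases hΛ' : Λ p.2 = 0
        · simp [hπxzt' p, hΛ']
        · have hq : πxzt p / ρxzt p = f p.1 * Λ p.2 := by
            rw [hπxzt' p, mul_assoc, mul_div_cancel_left₀ _ hρ]
          rw [hq, Real.log_mul hf' hΛ', mul_add]
  have hEπ1 : (∫ p, πxy p * Real.log (πxy p / ρxy p)
        ∂((volume : Measure (Fin n → ℝ)).prod (volume : Measure (Fin n → ℝ))))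
      = ∫ p, πxy p * Real.log (f p.1)
        ∂((volume : Measure (Fin n → ℝ)).prod (volume : Measure (Fin n → ℝ))) := by
    simp only [hid1]
  have hEπ2 : (∫ p, πxzt p * Real.log (πxzt p / ρxzt p) ∂((volume : Measure (Fin n → ℝ)).prod mQ))
      = (∫ p, πxzt p * Real.log (f p.1) ∂((volume : Measure (Fin n → ℝ)).prod mQ))
        + ∫ p, πxzt p * Real.log (Λ p.2) ∂((volume : Measure (Fin n → ℝ)).prod mQ) := by
    simp only [hid2]
    exact integral_add hπg2 hπL
  -- Gibbs inequalities
  have hG1 : (∫ p, σxy p ∂((volume : Measure (Fin n → ℝ)).prod (volume : Measure (Fin n → ℝ))))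
      - (∫ p, πxy p ∂((volume : Measure (Fin n → ℝ)).prod (volume : Measure (Fin n → ℝ))))
      ≤ (∫ p, σxy p * Real.log (σxy p / ρxy p)
        ∂((volume : Measure (Fin n → ℝ)).prod (volume : Measure (Fin n → ℝ))))
      - ∫ p, σxy p * Real.log (f p.1)
        ∂((volume : Measure (Fin n → ℝ)).prod (volume : Measure (Fin n → ℝ))) := by
    have e1 : (∫ p, (σxy p - πxy p)
        ∂((volume : Measure (Fin n → ℝ)).prod (volume : Measure (Fin n → ℝ))))
        = (∫ p, σxy p ∂((volume : Measure (Fin n → ℝ)).prod (volume : Measure (Fin n → ℝ))))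
          - ∫ p, πxy p ∂((volume : Measure (Fin n → ℝ)).prod (volume : Measure (Fin n → ℝ))) :=
      integral_sub hσxy_int hπxy_int
    have e2 : (∫ p, (σxy p * Real.log (σxy p / ρxy p) - σxy p * Real.log (f p.1))
        ∂((volume : Measure (Fin n → ℝ)).prod (volume : Measure (Fin n → ℝ))))
        = (∫ p, σxy p * Real.log (σxy p / ρxy p)
            ∂((volume : Measure (Fin n → ℝ)).prod (volume : Measure (Fin n → ℝ))))
          - ∫ p, σxy p * Real.log (f p.1)
            ∂((volume : Measure (Fin n → ℝ)).prod (volume : Measure (Fin n → ℝ))) :=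
      integral_sub hσxy_ent hσg1
    rw [← e1, ← e2]
    refine integral_mono_ae (hσxy_int.sub hπxy_int) (hσxy_ent.sub hσg1) ?_
    filter_upwards [hσxy_van, hσxy_f0] with p h1 h2
    by_cases hσ0 : σxy p = 0
    · simp only [hσ0, zero_mul, zero_sub, sub_zero]
      linarith [hπxy_nn p]
    · have hρ : ρxy p ≠ 0 := fun h => hσ0 (h1 h)
      have hf' : f p.1 ≠ 0 := fun h => hσ0 (h2 h)
      have key := gibbs_pt (hσxy_nn p) (hπxy_nn p) (fun h => by
        rw [hπxy p] at h
        rcases mul_eq_zero.mp h with h | h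
        exacts [h1 h, h2 h])
      have e : σxy p * Real.log (σxy p / πxy p)
          = σxy p * Real.log (σxy p / ρxy p) - σxy p * Real.log (f p.1) := by
        rw [hπxy p, ← div_div, Real.log_div (div_ne_zero hσ0 hρ) hf', mul_sub]
      rw [e] at key
      exact key
  have hG2 : (∫ p, σxzt p ∂((volume : Measure (Fin n → ℝ)).prod mQ))
      - (∫ p, πxzt p ∂((volume : Measure (Fin n → ℝ)).prod mQ))
      ≤ (∫ p, σxzt p * Real.log (σxzt p / ρxzt p) ∂((volume : Measure (Fin n → ℝ)).prod mQ))
      - (∫ p, σxzt p * Real.log (f p.1) ∂((volume : Measure (Fin n → ℝ)).prod mQ))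
      - ∫ p, σxzt p * Real.log (Λ p.2) ∂((volume : Measure (Fin n → ℝ)).prod mQ) := by
    have e1 : (∫ p, (σxzt p - πxzt p) ∂((volume : Measure (Fin n → ℝ)).prod mQ))
        = (∫ p, σxzt p ∂((volume : Measure (Fin n → ℝ)).prod mQ))
          - ∫ p, πxzt p ∂((volume : Measure (Fin n → ℝ)).prod mQ) :=
      integral_sub hσxzt_int hπxzt_int
    have e2 : (∫ p, (σxzt p * Real.log (σxzt p / ρxzt p) - σxzt p * Real.log (f p.1)
          - σxzt p * Real.log (Λ p.2)) ∂((volume : Measure (Fin n → ℝ)).prod mQ))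
        = (∫ p, (σxzt p * Real.log (σxzt p / ρxzt p) - σxzt p * Real.log (f p.1))
            ∂((volume : Measure (Fin n → ℝ)).prod mQ))
          - ∫ p, σxzt p * Real.log (Λ p.2) ∂((volume : Measure (Fin n → ℝ)).prod mQ) :=
      integral_sub (hσxzt_ent.sub hσg2) hσL
    have e3 : (∫ p, (σxzt p * Real.log (σxzt p / ρxzt p) - σxzt p * Real.log (f p.1))
          ∂((volume : Measure (Fin n → ℝ)).prod mQ))
        = (∫ p, σxzt p * Real.log (σxzt p / ρxzt p) ∂((volume : Measure (Fin n → ℝ)).prod mQ))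
          - ∫ p, σxzt p * Real.log (f p.1) ∂((volume : Measure (Fin n → ℝ)).prod mQ) :=
      integral_sub hσxzt_ent hσg2
    rw [← e1, ← e3, ← e2]
    refine integral_mono_ae (hσxzt_int.sub hπxzt_int) ((hσxzt_ent.sub hσg2).sub hσL) ?_
    filter_upwards [hσxzt_van, hσxzt_f0, hσxzt_Λ0] with p h1 h2 h3
    by_cases hσ0 : σxzt p = 0
    · simp only [hσ0, zero_mul, zero_sub, sub_zero]
      linarith [hπxzt_nn p]
    · have hρ : ρxzt p ≠ 0 := fun h => hσ0 (h1 h)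
      have hf' : f p.1 ≠ 0 := fun h => hσ0 (h2 h)
      have hΛ' : Λ p.2 ≠ 0 := fun h => hσ0 (h3 h)
      have key := gibbs_pt (hσxzt_nn p) (hπxzt_nn p) (fun h => by
        rw [hπxzt' p] at h
        rcases mul_eq_zero.mp h with h | h
        · rcases mul_eq_zero.mp h with h | h
          exacts [h1 h, h2 h]
        · exact h3 h)
      have e : σxzt p * Real.log (σxzt p / πxzt p)
          = σxzt p * Real.log (σxzt p / ρxzt p) - σxzt p * Real.log (f p.1)
            - σxzt p * Real.log (Λ p.2) := by
        rw [hπxzt' p, ← div_div, ← div_div,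
          Real.log_div (div_ne_zero (div_ne_zero hσ0 hρ) hf') hΛ',
          Real.log_div (div_ne_zero hσ0 hρ) hf', mul_sub, mul_sub]
      rw [e] at key
      exact key
  -- assemble
  simp only [dEnt]
  rw [hvol2, hmzt']
  have hVσ1 := aux_val_fst (F := σxy) (g := fun x => Real.log (f x)) hσg1
  have hVσ2 := aux_val_fst (F := σxzt) (g := fun x => Real.log (f x)) hσg2
  have hVπ1 := aux_val_fst (F := πxy) (g := fun x => Real.log (f x)) hπg1
  have hVπ2 := aux_val_fst (F := πxzt) (g := fun x => Real.log (f x)) hπg2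
  have hEπ1' : (∫ p, πxy p * Real.log (πxy p / ρxy p)
        ∂((volume : Measure (Fin n → ℝ)).prod (volume : Measure (Fin n → ℝ))))
      = ∫ x, (∫ y, πxy (x, y)) * Real.log (f x) := by rw [hEπ1, hVπ1]
  linarith [hG1, hG2, hVσ1, hVσ2, hT3σ, hsumσ, hmassσ, hmassπ, hEπ1', hEπ2, hVπ2, hT3π, hsumπ]
end

section
/- Let n ≥ 1, let ρ_xy : ℝⁿ×ℝⁿ → [0,∞) and ρ_xzt : ℝⁿ×ℝⁿ×[0,1] → [0,∞) be integrable, ρ₀ : ℝⁿ → [0,∞) integrable, and Q : ℝⁿ×[0,1] → [0,∞) measurable. Suppose (π¹_xy, π¹_xzt) and (π²_xy, π²_xzt) are two pairs of nonnegative measurable functions, each vanishing a.e. where ρ_xy respectively ρ_xzt vanish, each satisfying the constraints ∫ π_xy(x,y) dy + ∫_0^1 ∫ π_xzt(x,z,t) dz dt = ρ₀(x) for a.e. x and ∫ π_xzt(x,z,t) dx = Q(z,t) for a.e. (z,t), each with D(π_xy‖ρ_xy) + D(π_xzt‖ρ_xzt) < ∞, and both attaining the infimum of D(π_xy‖ρ_xy)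 + D(π_xzt‖ρ_xzt) over all such constrained pairs. Then π¹_xy = π²_xy a.e. and π¹_xzt = π²_xzt a.e. -/
open MeasureTheory

/-- Feasibility for Problem 2: a pair of couplings is measurable, nonnegative, vanishes a.e.
where the prior couplings vanish, matches the initial marginal `ρ₀` and the spatio-temporal
killing marginal `Q`, and has finite (i.e. integrable) relative-entropy integrands. -/
def Feasible (n : ℕ)
    (ρxy : (Fin n → ℝ) × (Fin n → ℝ) → ℝ)
    (ρxzt : (Fin n → ℝ) × (Fin n → ℝ) × ℝ → ℝ)
    (ρ₀ : (Fin n → ℝ) → ℝ) (Q : (Fin n → ℝ) × ℝ → ℝ)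
    (mzt : Measure ((Fin n → ℝ) × (Fin n → ℝ) × ℝ)) (mQ : Measure ((Fin n → ℝ) × ℝ))
    (πxy : (Fin n → ℝ) × (Fin n → ℝ) → ℝ)
    (πxzt : (Fin n → ℝ) × (Fin n → ℝ) × ℝ → ℝ) : Prop :=
  Measurable πxy ∧ Measurable πxzt ∧
  (∀ p, 0 ≤ πxy p) ∧ (∀ p, 0 ≤ πxzt p) ∧
  (∀ᵐ p ∂(volume : Measure ((Fin n → ℝ) × (Fin n → ℝ))), ρxy p = 0 → πxy p = 0) ∧
  (∀ᵐ p ∂mzt, ρxzt p = 0 → πxzt p = 0) ∧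
  (∀ᵐ x ∂(volume : Measure (Fin n → ℝ)),
    (∫ y, πxy (x, y)) + ∫ t in Set.Icc (0:ℝ) 1, ∫ z, πxzt (x, z, t) = ρ₀ x) ∧
  (∀ᵐ zt ∂mQ, (∫ x, πxzt (x, zt.1, zt.2)) = Q zt) ∧
  Integrable (fun p => πxy p * Real.log (πxy p / ρxy p)) volume ∧
  Integrable (fun p => πxzt p * Real.log (πxzt p / ρxzt p)) mzt


lemma aux_neg_one_le {t : ℝ} (ht : 0 < t) : -1 ≤ t * Real.log t := by
  rcases le_or_gt 1 t with h | h
  · nlinarith [Real.log_nonneg h]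
  · have h1 : Real.log t⁻¹ ≤ t⁻¹ - 1 := Real.log_le_sub_one_of_pos (by positivity)
    rw [Real.log_inv] at h1
    have ht' : t * t⁻¹ = 1 := mul_inv_cancel₀ ht.ne'
    nlinarith

lemma aux_lb {x q : ℝ} (hx : 0 ≤ x) (hq : 0 ≤ q) : -q ≤ x * Real.log (x / q) := by
  rcases hq.eq_or_lt with h | h
  · simp [← h]
  rcases hx.eq_or_lt with h' | h'
  · simp [← h']; linarith
  have ht : 0 < x / q := by positivity
  have := aux_neg_one_le ht
  have hxe : x * Real.log (x / q) = q * ((x / q) * Real.log (x / q)) := by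
    field_simp
  nlinarith

lemma aux_dom {x q : ℝ} (hx : 0 ≤ x) (hq : 0 ≤ q) (h0 : q = 0 → x = 0) :
    x ≤ Real.exp 1 * q + |x * Real.log (x / q)| := by
  rcases hq.eq_or_lt with h | h
  · simp [h0 h.symm]; positivity
  rcases le_or_gt x (Real.exp 1 * q) with h' | h'
  · have : (0:ℝ) ≤ |x * Real.log (x / q)| := abs_nonneg _
    linarith
  · have hx0 : 0 < x := lt_trans (by positivity) h'
    have hlt : 1 < Real.log (x / q) := by
      rw [Real.lt_log_iff_exp_lt (by positivity)]
      rw [lt_div_iff₀ h]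
      linarith [h']
    have : x ≤ x * Real.log (x / q) := by nlinarith
    have habs : x * Real.log (x / q) ≤ |x * Real.log (x / q)| := le_abs_self _
    have hge : (0:ℝ) ≤ Real.exp 1 * q := by positivity
    linarith

lemma aux_split {x q : ℝ} (hx : 0 ≤ x) (hq : 0 < q) :
    x * Real.log (x / q) = x * Real.log x - x * Real.log q := by
  rcases hx.eq_or_lt with h | h
  · simp [← h]
  · rw [Real.log_div h.ne' hq.ne']; ring

lemma aux_cvx {a b q : ℝ} (ha : 0 ≤ a) (hb : 0 ≤ b) (hq : 0 ≤ q)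
    (h0 : q = 0 → a = 0 ∧ b = 0) :
    ((a + b) / 2) * Real.log (((a + b) / 2) / q)
      ≤ (a * Real.log (a / q) + b * Real.log (b / q)) / 2 := by
  rcases hq.eq_or_lt with h | h
  · obtain ⟨ha0, hb0⟩ := h0 h.symm
    simp [ha0, hb0]
  have hm : (0:ℝ) ≤ (a + b) / 2 := by positivity
  have hc := Real.convexOn_mul_log.2 (Set.mem_Ici.mpr ha) (Set.mem_Ici.mpr hb)
    (by norm_num : (0:ℝ) ≤ 1/2) (by norm_num : (0:ℝ) ≤ 1/2) (by norm_num)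
  simp only [smul_eq_mul] at hc
  have he : (1/2 : ℝ) * a + (1/2 : ℝ) * b = (a + b) / 2 := by ring
  rw [he] at hc
  rw [aux_split ha h, aux_split hb h, aux_split hm h]
  linarith

lemma aux_strict {a b q : ℝ} (ha : 0 ≤ a) (hb : 0 ≤ b) (hq : 0 ≤ q)
    (h0 : q = 0 → a = 0 ∧ b = 0)
    (heq : (a * Real.log (a / q) + b * Real.log (b / q)) / 2
      = ((a + b) / 2) * Real.log (((a + b) / 2) / q)) : a = b := by
  rcases hq.eq_or_lt with h | h
  · obtain ⟨ha0, hb0⟩ := h0 h.symm; rw [ha0, hb0]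
  by_contra hab
  have hm : (0:ℝ) ≤ (a + b) / 2 := by positivity
  have hc := Real.strictConvexOn_mul_log.2 (Set.mem_Ici.mpr ha) (Set.mem_Ici.mpr hb) hab
    (by norm_num : (0:ℝ) < 1/2) (by norm_num : (0:ℝ) < 1/2) (by norm_num)
  simp only [smul_eq_mul] at hc
  have he : (1/2 : ℝ) * a + (1/2 : ℝ) * b = (a + b) / 2 := by ring
  rw [he] at hc
  rw [aux_split ha h, aux_split hb h, aux_split hm h] at heq
  linarith

lemma ent_aesm {α : Type*} [MeasurableSpace α] {μ : Measure α} {π ρ : α → ℝ}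
    (hπ : Measurable π) (hρ : AEMeasurable ρ μ) :
    AEStronglyMeasurable (fun p => π p * Real.log (π p / ρ p)) μ :=
  (hπ.aemeasurable.mul
    (Real.measurable_log.comp_aemeasurable (hπ.aemeasurable.div hρ))).aestronglyMeasurable

lemma integrable_of_entropy {α : Type*} [MeasurableSpace α] {μ : Measure α}
    {π ρ : α → ℝ} (hm : AEStronglyMeasurable π μ) (hnn : ∀ p, 0 ≤ π p)
    (hρnn : ∀ p, 0 ≤ ρ p)
    (hv : ∀ᵐ p ∂μ, ρ p = 0 → π p = 0) (hρ : Integrable ρ μ)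
    (hent : Integrable (fun p => π p * Real.log (π p / ρ p)) μ) :
    Integrable π μ := by
  refine Integrable.mono' ((hρ.const_mul (Real.exp 1)).add hent.abs) hm ?_
  filter_upwards [hv] with p hp
  rw [Real.norm_eq_abs, abs_of_nonneg (hnn p)]
  exact aux_dom (hnn p) (hρnn p) hp

lemma mid_ent_integrable {α : Type*} [MeasurableSpace α] {μ : Measure α} {a b ρ : α → ℝ}
    (hma : Measurable a) (hmb : Measurable b) (hρm : AEMeasurable ρ μ)
    (hna : ∀ p, 0 ≤ a p) (hnb : ∀ p, 0 ≤ b p) (hnρ : ∀ p, 0 ≤ ρ p)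
    (hva : ∀ᵐ p ∂μ, ρ p = 0 → a p = 0) (hvb : ∀ᵐ p ∂μ, ρ p = 0 → b p = 0)
    (hρ : Integrable ρ μ)
    (hia : Integrable (fun p => a p * Real.log (a p / ρ p)) μ)
    (hib : Integrable (fun p => b p * Real.log (b p / ρ p)) μ) :
    Integrable (fun p => ((a p + b p) / 2) * Real.log (((a p + b p) / 2) / ρ p)) μ := by
  refine integrable_of_le_of_le (f := fun p => ((a p + b p) / 2) * Real.log (((a p + b p) / 2) / ρ p))
    (g₁ := fun p => -(ρ p))
    (g₂ := fun p => (a p * Real.log (a p / ρ p) + b p * Real.log (b p / ρ p)) / 2)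
    (ent_aesm ((hma.add hmb).div_const 2) hρm) ?_ ?_ hρ.neg ((hia.add hib).div_const 2)
  · filter_upwards with p
    exact aux_lb (div_nonneg (add_nonneg (hna p) (hnb p)) (by norm_num)) (hnρ p)
  · filter_upwards [hva, hvb] with p h1 h2
    exact aux_cvx (hna p) (hnb p) (hnρ p) (fun h => ⟨h1 h, h2 h⟩)

/-- Uniqueness of the minimizer of Problem 2 (Theorem 1(i)): the objective is strictly convex
and the constraints are linear, so two feasible pairs of couplings both attaining the infimum
of `D(π_xy‖ρ_xy) + D(π_xzt‖ρ_xzt)` coincide almost everywhere. -/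
theorem schroedinger_couplings_unique_minimizer
    (n : ℕ) (hn : 1 ≤ n)
    (ρxy : (Fin n → ℝ) × (Fin n → ℝ) → ℝ)
    (ρxzt : (Fin n → ℝ) × (Fin n → ℝ) × ℝ → ℝ)
    (ρ₀ : (Fin n → ℝ) → ℝ) (Q : (Fin n → ℝ) × ℝ → ℝ)
    (mzt : Measure ((Fin n → ℝ) × (Fin n → ℝ) × ℝ))
    (hmzt : mzt = (volume : Measure ((Fin n → ℝ) × (Fin n → ℝ) × ℝ)).restrict
      {p | p.2.2 ∈ Set.Icc (0:ℝ) 1})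
    (mQ : Measure ((Fin n → ℝ) × ℝ))
    (hmQ : mQ = (volume : Measure ((Fin n → ℝ) × ℝ)).restrict {p | p.2 ∈ Set.Icc (0:ℝ) 1})
    (hρxy_nonneg : ∀ p, 0 ≤ ρxy p) (hρxzt_nonneg : ∀ p, 0 ≤ ρxzt p)
    (hρ₀_nonneg : ∀ x, 0 ≤ ρ₀ x) (hQ_nonneg : ∀ p, 0 ≤ Q p)
    (hρxy_int : Integrable ρxy volume) (hρxzt_int : Integrable ρxzt mzt)
    (hρ₀_int : Integrable ρ₀ volume) (hQ_meas : Measurable Q)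
    (π1xy : (Fin n → ℝ) × (Fin n → ℝ) → ℝ) (π1xzt : (Fin n → ℝ) × (Fin n → ℝ) × ℝ → ℝ)
    (π2xy : (Fin n → ℝ) × (Fin n → ℝ) → ℝ) (π2xzt : (Fin n → ℝ) × (Fin n → ℝ) × ℝ → ℝ)
    (h1 : Feasible n ρxy ρxzt ρ₀ Q mzt mQ π1xy π1xzt)
    (h2 : Feasible n ρxy ρxzt ρ₀ Q mzt mQ π2xy π2xzt)
    -- both pairs attain the infimum of the objective over all feasible pairs:
    (h1min : ∀ σxy σxzt, Feasible n ρxy ρxzt ρ₀ Q mzt mQ σxy σxzt →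
      dEnt volume π1xy ρxy + dEnt mzt π1xzt ρxzt ≤
        dEnt volume σxy ρxy + dEnt mzt σxzt ρxzt)
    (h2min : ∀ σxy σxzt, Feasible n ρxy ρxzt ρ₀ Q mzt mQ σxy σxzt →
      dEnt volume π2xy ρxy + dEnt mzt π2xzt ρxzt ≤
        dEnt volume σxy ρxy + dEnt mzt σxzt ρxzt) :
    π1xy =ᵐ[(volume : Measure ((Fin n → ℝ) × (Fin n → ℝ)))] π2xy ∧
      π1xzt =ᵐ[mzt] π2xzt := by
  
  classical
  haveI : SFinite mQ := by rw [hmQ]; infer_instance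
  obtain ⟨h1mxy, h1mxzt, h1nxy, h1nxzt, h1vxy, h1vxzt, h1c1, h1c2, h1ixy, h1ixzt⟩ := id h1
  obtain ⟨h2mxy, h2mxzt, h2nxy, h2nxzt, h2vxy, h2vxzt, h2c1, h2c2, h2ixy, h2ixzt⟩ := id h2
  have hmQ' : mQ = (volume : Measure (Fin n → ℝ)).prod
      ((volume : Measure ℝ).restrict (Set.Icc (0:ℝ) 1)) := by
    rw [hmQ, Measure.volume_eq_prod]
    rw [show {p : (Fin n → ℝ) × ℝ | p.2 ∈ Set.Icc (0:ℝ) 1}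
        = Set.univ ×ˢ Set.Icc (0:ℝ) 1 by ext p; simp]
    rw [← Measure.prod_restrict, Measure.restrict_univ]
  have hmzt' : mzt = (volume : Measure (Fin n → ℝ)).prod mQ := by
    rw [hmzt, Measure.volume_eq_prod, hmQ]
    rw [show {p : (Fin n → ℝ) × (Fin n → ℝ) × ℝ | p.2.2 ∈ Set.Icc (0:ℝ) 1}
        = Set.univ ×ˢ {p : (Fin n → ℝ) × ℝ | p.2 ∈ Set.Icc (0:ℝ) 1} by ext p; simp]
    rw [← Measure.prod_restrict, Measure.restrict_univ]
  have hπ1xy_int : Integrable π1xy volume :=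
    integrable_of_entropy h1mxy.aestronglyMeasurable h1nxy hρxy_nonneg h1vxy hρxy_int h1ixy
  have hπ2xy_int : Integrable π2xy volume :=
    integrable_of_entropy h2mxy.aestronglyMeasurable h2nxy hρxy_nonneg h2vxy hρxy_int h2ixy
  have hπ1xzt_int : Integrable π1xzt mzt :=
    integrable_of_entropy h1mxzt.aestronglyMeasurable h1nxzt hρxzt_nonneg h1vxzt hρxzt_int h1ixzt
  have hπ2xzt_int : Integrable π2xzt mzt :=
    integrable_of_entropy h2mxzt.aestronglyMeasurable h2nxzt hρxzt_nonneg h2vxzt hρxzt_int h2ixzt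
  have hmidxy : Integrable
      (fun p => ((π1xy p + π2xy p) / 2) * Real.log (((π1xy p + π2xy p) / 2) / ρxy p)) volume :=
    mid_ent_integrable h1mxy h2mxy hρxy_int.aemeasurable h1nxy h2nxy hρxy_nonneg
      h1vxy h2vxy hρxy_int h1ixy h2ixy
  have hmidxzt : Integrable
      (fun p => ((π1xzt p + π2xzt p) / 2) * Real.log (((π1xzt p + π2xzt p) / 2) / ρxzt p)) mzt :=
    mid_ent_integrable h1mxzt h2mxzt hρxzt_int.aemeasurable h1nxzt h2nxzt hρxzt_nonneg
      h1vxzt h2vxzt hρxzt_int h1ixzt h2ixzt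
  have hσ : Feasible n ρxy ρxzt ρ₀ Q mzt mQ (fun p => (π1xy p + π2xy p) / 2)
      (fun p => (π1xzt p + π2xzt p) / 2) := by
    refine ⟨(h1mxy.add h2mxy).div_const 2, (h1mxzt.add h2mxzt).div_const 2,
      fun p => div_nonneg (add_nonneg (h1nxy p) (h2nxy p)) (by norm_num),
      fun p => div_nonneg (add_nonneg (h1nxzt p) (h2nxzt p)) (by norm_num),
      ?_, ?_, ?_, ?_, hmidxy, hmidxzt⟩
    · filter_upwards [h1vxy, h2vxy] with p hp1 hp2 hz
      rw [hp1 hz, hp2 hz]; norm_num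
    · filter_upwards [h1vxzt, h2vxzt] with p hp1 hp2 hz
      rw [hp1 hz, hp2 hz]; norm_num
    · -- first marginal constraint
      have hs1 : ∀ᵐ x ∂(volume : Measure (Fin n → ℝ)),
          Integrable (fun y => π1xy (x, y)) volume := by
        have h := hπ1xy_int; rw [Measure.volume_eq_prod] at h; exact h.prod_right_ae
      have hs2 : ∀ᵐ x ∂(volume : Measure (Fin n → ℝ)),
          Integrable (fun y => π2xy (x, y)) volume := by
        have h := hπ2xy_int; rw [Measure.volume_eq_prod] at h; exact h.prod_right_ae
      have ht1 : ∀ᵐ x ∂(volume : Measure (Fin n → ℝ)),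
          Integrable (fun zt => π1xzt (x, zt)) mQ := by
        have h := hπ1xzt_int; rw [hmzt'] at h; exact h.prod_right_ae
      have ht2 : ∀ᵐ x ∂(volume : Measure (Fin n → ℝ)),
          Integrable (fun zt => π2xzt (x, zt)) mQ := by
        have h := hπ2xzt_int; rw [hmzt'] at h; exact h.prod_right_ae
      filter_upwards [h1c1, h2c1, hs1, hs2, ht1, ht2] with x e1 e2 i1 i2 j1 j2
      have hxy : (∫ y, ((π1xy (x, y) + π2xy (x, y)) / 2))
          = ((∫ y, π1xy (x, y)) + ∫ y, π2xy (x, y)) / 2 := by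
        rw [integral_div, integral_add i1 i2]
      have j1' : Integrable (fun zt : (Fin n → ℝ) × ℝ => π1xzt (x, zt))
          ((volume : Measure (Fin n → ℝ)).prod
            ((volume : Measure ℝ).restrict (Set.Icc (0:ℝ) 1))) := by
        rw [← hmQ']; exact j1
      have j2' : Integrable (fun zt : (Fin n → ℝ) × ℝ => π2xzt (x, zt))
          ((volume : Measure (Fin n → ℝ)).prod
            ((volume : Measure ℝ).restrict (Set.Icc (0:ℝ) 1))) := by
        rw [← hmQ']; exact j2
      have hz12 : ∀ᵐ t ∂((volume : Measure ℝ).restrict (Set.Icc (0:ℝ) 1)),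
          Integrable (fun z => π1xzt (x, z, t)) volume ∧
            Integrable (fun z => π2xzt (x, z, t)) volume := by
        filter_upwards [j1'.prod_left_ae, j2'.prod_left_ae] with t a b using ⟨a, b⟩
      have hI1 : Integrable (fun t => ∫ z, π1xzt (x, z, t))
          ((volume : Measure ℝ).restrict (Set.Icc (0:ℝ) 1)) := j1'.integral_prod_right
      have hI2 : Integrable (fun t => ∫ z, π2xzt (x, z, t))
          ((volume : Measure ℝ).restrict (Set.Icc (0:ℝ) 1)) := j2'.integral_prod_right
      have step1 : (∫ t in Set.Icc (0:ℝ) 1, ∫ z, ((π1xzt (x, z, t) + π2xzt (x, z, t)) / 2))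
          = ∫ t in Set.Icc (0:ℝ) 1,
              (((∫ z, π1xzt (x, z, t)) + ∫ z, π2xzt (x, z, t)) / 2) := by
        refine integral_congr_ae ?_
        filter_upwards [hz12] with t hab
        rw [integral_div, integral_add hab.1 hab.2]
      have step2 : (∫ t in Set.Icc (0:ℝ) 1,
              (((∫ z, π1xzt (x, z, t)) + ∫ z, π2xzt (x, z, t)) / 2))
          = ((∫ t in Set.Icc (0:ℝ) 1, ∫ z, π1xzt (x, z, t))
            + ∫ t in Set.Icc (0:ℝ) 1, ∫ z, π2xzt (x, z, t)) / 2 := by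
        rw [integral_div, integral_add hI1 hI2]
      rw [hxy, step1.trans step2]
      linarith [e1, e2]
    · -- second marginal constraint
      have k1 : ∀ᵐ zt ∂mQ, Integrable (fun x => π1xzt (x, zt)) volume := by
        have h := hπ1xzt_int; rw [hmzt'] at h; exact h.prod_left_ae
      have k2 : ∀ᵐ zt ∂mQ, Integrable (fun x => π2xzt (x, zt)) volume := by
        have h := hπ2xzt_int; rw [hmzt'] at h; exact h.prod_left_ae
      filter_upwards [h1c2, h2c2, k1, k2] with zt e1 e2 i1 i2
      have i1' : Integrable (fun x => π1xzt (x, zt.1, zt.2)) volume := i1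
      have i2' : Integrable (fun x => π2xzt (x, zt.1, zt.2)) volume := i2
      have : (∫ x, ((π1xzt (x, zt.1, zt.2) + π2xzt (x, zt.1, zt.2)) / 2))
          = ((∫ x, π1xzt (x, zt.1, zt.2)) + ∫ x, π2xzt (x, zt.1, zt.2)) / 2 := by
        rw [integral_div, integral_add i1' i2']
      rw [this]
      linarith [e1, e2]
  have hmin := h1min _ _ hσ
  have hVeq : dEnt volume π1xy ρxy + dEnt mzt π1xzt ρxzt
      = dEnt volume π2xy ρxy + dEnt mzt π2xzt ρxzt :=
    le_antisymm (h1min _ _ h2) (h2min _ _ h1)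
  simp only [dEnt] at hmin hVeq
  have hFxy_int : Integrable (fun p =>
      (π1xy p * Real.log (π1xy p / ρxy p) + π2xy p * Real.log (π2xy p / ρxy p)) / 2
        - ((π1xy p + π2xy p) / 2) * Real.log (((π1xy p + π2xy p) / 2) / ρxy p)) volume :=
    ((h1ixy.add h2ixy).div_const 2).sub hmidxy
  have hFxzt_int : Integrable (fun p =>
      (π1xzt p * Real.log (π1xzt p / ρxzt p) + π2xzt p * Real.log (π2xzt p / ρxzt p)) / 2
        - ((π1xzt p + π2xzt p) / 2) * Real.log (((π1xzt p + π2xzt p) / 2) / ρxzt p)) mzt :=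
    ((h1ixzt.add h2ixzt).div_const 2).sub hmidxzt
  have hFxy_nn : (0 : ((Fin n → ℝ) × (Fin n → ℝ)) → ℝ) ≤ᵐ[volume] (fun p =>
      (π1xy p * Real.log (π1xy p / ρxy p) + π2xy p * Real.log (π2xy p / ρxy p)) / 2
        - ((π1xy p + π2xy p) / 2) * Real.log (((π1xy p + π2xy p) / 2) / ρxy p)) := by
    filter_upwards [h1vxy, h2vxy] with p a b
    have := aux_cvx (h1nxy p) (h2nxy p) (hρxy_nonneg p) (fun h => ⟨a h, b h⟩)
    simp only [Pi.zero_apply]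
    linarith
  have hFxzt_nn : (0 : ((Fin n → ℝ) × (Fin n → ℝ) × ℝ) → ℝ) ≤ᵐ[mzt] (fun p =>
      (π1xzt p * Real.log (π1xzt p / ρxzt p) + π2xzt p * Real.log (π2xzt p / ρxzt p)) / 2
        - ((π1xzt p + π2xzt p) / 2) * Real.log (((π1xzt p + π2xzt p) / 2) / ρxzt p)) := by
    filter_upwards [h1vxzt, h2vxzt] with p a b
    have := aux_cvx (h1nxzt p) (h2nxzt p) (hρxzt_nonneg p) (fun h => ⟨a h, b h⟩)
    simp only [Pi.zero_apply]
    linarith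
  have hIxy : (∫ p, ((π1xy p * Real.log (π1xy p / ρxy p)
        + π2xy p * Real.log (π2xy p / ρxy p)) / 2
        - ((π1xy p + π2xy p) / 2) * Real.log (((π1xy p + π2xy p) / 2) / ρxy p)))
      = ((∫ p, π1xy p * Real.log (π1xy p / ρxy p))
          + ∫ p, π2xy p * Real.log (π2xy p / ρxy p)) / 2
        - ∫ p, ((π1xy p + π2xy p) / 2) * Real.log (((π1xy p + π2xy p) / 2) / ρxy p) := by
    have hsxy : Integrable (fun p => (π1xy p * Real.log (π1xy p / ρxy p)
        + π2xy p * Real.log (π2xy p / ρxy p)) / 2) volume := (h1ixy.add h2ixy).div_const 2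
    rw [integral_sub hsxy hmidxy, integral_div, integral_add h1ixy h2ixy]
  have hIxzt : (∫ p, ((π1xzt p * Real.log (π1xzt p / ρxzt p)
        + π2xzt p * Real.log (π2xzt p / ρxzt p)) / 2
        - ((π1xzt p + π2xzt p) / 2) * Real.log (((π1xzt p + π2xzt p) / 2) / ρxzt p)) ∂mzt)
      = ((∫ p, π1xzt p * Real.log (π1xzt p / ρxzt p) ∂mzt)
          + ∫ p, π2xzt p * Real.log (π2xzt p / ρxzt p) ∂mzt) / 2
        - ∫ p, ((π1xzt p + π2xzt p) / 2) * Real.log (((π1xzt p + π2xzt p) / 2) / ρxzt p) ∂mzt := by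
    have hsxzt : Integrable (fun p => (π1xzt p * Real.log (π1xzt p / ρxzt p)
        + π2xzt p * Real.log (π2xzt p / ρxzt p)) / 2) mzt := (h1ixzt.add h2ixzt).div_const 2
    rw [integral_sub hsxzt hmidxzt, integral_div, integral_add h1ixzt h2ixzt]
  have n1 := integral_nonneg_of_ae hFxy_nn
  have n2 := integral_nonneg_of_ae hFxzt_nn
  have hxy0 : (∫ p, ((π1xy p * Real.log (π1xy p / ρxy p)
        + π2xy p * Real.log (π2xy p / ρxy p)) / 2
        - ((π1xy p + π2xy p) / 2) * Real.log (((π1xy p + π2xy p) / 2) / ρxy p))) = 0 := by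
    rw [hIxy]
    rw [hIxy] at n1
    rw [hIxzt] at n2
    linarith
  have hxzt0 : (∫ p, ((π1xzt p * Real.log (π1xzt p / ρxzt p)
        + π2xzt p * Real.log (π2xzt p / ρxzt p)) / 2
        - ((π1xzt p + π2xzt p) / 2) * Real.log (((π1xzt p + π2xzt p) / 2) / ρxzt p)) ∂mzt) = 0 := by
    rw [hIxzt]
    rw [hIxy] at n1
    rw [hIxzt] at n2
    linarith
  have hxyae := (integral_eq_zero_iff_of_nonneg_ae hFxy_nn hFxy_int).mp hxy0
  have hxztae := (integral_eq_zero_iff_of_nonneg_ae hFxzt_nn hFxzt_int).mp hxzt0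
  constructor
  · filter_upwards [hxyae, h1vxy, h2vxy] with p h0 a b
    simp only [Pi.zero_apply] at h0
    exact aux_strict (h1nxy p) (h2nxy p) (hρxy_nonneg p) (fun h => ⟨a h, b h⟩) (by linarith)
  · filter_upwards [hxztae, h1vxzt, h2vxzt] with p h0 a b
    simp only [Pi.zero_apply] at h0
    exact aux_strict (h1nxzt p) (h2nxzt p) (hρxzt_nonneg p) (fun h => ⟨a h, b h⟩) (by linarith)
end

section
/- Let n ≥ 1 and let r(s,x,t,y) > 0 be a measurable family of transition densities defined for 0 ≤ s ≤ t ≤ 1 and x, y ∈ ℝⁿ. Let V, Λ : [0,1]×ℝⁿ → [0,∞) be measurable and φ̂₀ : ℝⁿ → [0,∞) be measurable. Define φ̂(τ,w) := ∫_{ℝⁿ} r(0,x,τ,w) φ̂₀(x) dx and φ(τ,w) := ∫_{ℝⁿ} r(τ,w,1,y) dy + ∫_τ^1 ∫_{ℝⁿ} Λ(t,z) V(t,z) r(τ,w,t,z) dz dt. Define the couplings π*_xy(x,y) := r(0,x,1,y) φ̂₀(x) and π*_xzt(x,z,t) := Λ(t,z) V(t,z) r(0,x,t,z) φ̂₀(x),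 and for τ ∈ [0,1] and w ∈ ℝⁿ define the one-time density P_τ(w) := ∫_{ℝⁿ×ℝⁿ} [r(0,x,τ,w) r(τ,w,1,y)/r(0,x,1,y)] π*_xy(x,y) dx dy + ∫_τ^1 ∫_{ℝⁿ×ℝⁿ} [r(0,x,τ,w) r(τ,w,t,z)/r(0,x,t,z)] π*_xzt(x,z,t) dx dz dt. Then P_τ(w) = φ(τ,w) φ̂(τ,w) for every τ ∈ [0,1] and w ∈ ℝⁿ. -/
open MeasureTheory

/-- The backward factor (FS1):
`φ(τ,w) = ∫ r(τ,w,1,y) dy + ∫_τ^1 ∫ Λ(t,z) V(t,z) r(τ,w,t,z) dz dt`. -/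
noncomputable def phiBackward (n : ℕ)
    (r : ℝ → (Fin n → ℝ) → ℝ → (Fin n → ℝ) → ℝ)
    (V Λ : ℝ → (Fin n → ℝ) → ℝ) (τ : ℝ) (w : Fin n → ℝ) : ℝ :=
  (∫ y, r τ w 1 y) + ∫ t in τ..1, ∫ z, Λ t z * V t z * r τ w t z

/-- The forward factor (FS3): `φ̂(τ,w) = ∫ r(0,x,τ,w) phihat0(x) dx`. -/
noncomputable def phiForward (n : ℕ)
    (r : ℝ → (Fin n → ℝ) → ℝ → (Fin n → ℝ) → ℝ)
    (phihat0 : (Fin n → ℝ) → ℝ) (τ : ℝ) (w : Fin n → ℝ) : ℝ :=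
  ∫ x, r 0 x τ w * phihat0 x

/-- The optimal survival coupling `π*_xy(x,y) = r(0,x,1,y) phihat0(x)`. -/
noncomputable def couplingXY (n : ℕ)
    (r : ℝ → (Fin n → ℝ) → ℝ → (Fin n → ℝ) → ℝ)
    (phihat0 : (Fin n → ℝ) → ℝ) (x y : Fin n → ℝ) : ℝ :=
  r 0 x 1 y * phihat0 x

/-- The optimal killing coupling `π*_xzt(x,z,t) = Λ(t,z) V(t,z) r(0,x,t,z) phihat0(x)`. -/
noncomputable def couplingXZT (n : ℕ)
    (r : ℝ → (Fin n → ℝ) → ℝ → (Fin n → ℝ) → ℝ)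
    (V Λ : ℝ → (Fin n → ℝ) → ℝ) (phihat0 : (Fin n → ℝ) → ℝ)
    (x z : Fin n → ℝ) (t : ℝ) : ℝ :=
  Λ t z * V t z * r 0 x t z * phihat0 x

/-- The one-time density of the optimal posterior restricted to the primary space:
the mixture, under the optimal couplings, of the one-time densities at time `τ` of the prior
process pinned at `x` at time `0` and at `y` (resp. `z`) at time `1` (resp. the killing
time `t`). -/
noncomputable def Pdensity (n : ℕ)
    (r : ℝ → (Fin n → ℝ) → ℝ → (Fin n → ℝ) → ℝ)
    (V Λ : ℝ → (Fin n → ℝ) → ℝ) (phihat0 : (Fin n → ℝ) → ℝ)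
    (τ : ℝ) (w : Fin n → ℝ) : ℝ :=
  (∫ p : (Fin n → ℝ) × (Fin n → ℝ),
      r 0 p.1 τ w * r τ w 1 p.2 / r 0 p.1 1 p.2 * couplingXY n r phihat0 p.1 p.2)
    + ∫ t in τ..1, ∫ p : (Fin n → ℝ) × (Fin n → ℝ),
        r 0 p.1 τ w * r τ w t p.2 / r 0 p.1 t p.2 * couplingXZT n r V Λ phihat0 p.1 p.2 t

/-- Equation (12) of Theorem 1(iii): the one-time marginals of the optimal posterior
restricted to the primary space factor as `P_τ = φ(τ,·) φ̂(τ,·)`. -/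
theorem Pdensity_eq_phi_mul_phiHat
    (n : ℕ) (hn : 1 ≤ n)
    (r : ℝ → (Fin n → ℝ) → ℝ → (Fin n → ℝ) → ℝ)
    (hr_meas : Measurable (fun p : ℝ × (Fin n → ℝ) × ℝ × (Fin n → ℝ) =>
      r p.1 p.2.1 p.2.2.1 p.2.2.2))
    (hr_pos : ∀ s x t y, 0 ≤ s → s ≤ t → t ≤ 1 → 0 < r s x t y)
    (V Λ : ℝ → (Fin n → ℝ) → ℝ)
    (hV_meas : Measurable (fun p : ℝ × (Fin n → ℝ) => V p.1 p.2))
    (hΛ_meas : Measurable (fun p : ℝ × (Fin n → ℝ) => Λ p.1 p.2))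
    (hV_nonneg : ∀ t z, 0 ≤ V t z) (hΛ_nonneg : ∀ t z, 0 ≤ Λ t z)
    (phihat0 : (Fin n → ℝ) → ℝ) (hphihat0_meas : Measurable phihat0) (hphihat0_nonneg : ∀ x, 0 ≤ phihat0 x) :
    ∀ τ : ℝ, τ ∈ Set.Icc (0:ℝ) 1 → ∀ w : Fin n → ℝ,
      Pdensity n r V Λ phihat0 τ w =
        phiBackward n r V Λ τ w * phiForward n r phihat0 τ w := by
  intro τ hτ w
  obtain ⟨hτ0, hτ1⟩ := hτ
  unfold Pdensity phiBackward phiForward couplingXY couplingXZT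
  have h1 : (∫ p : (Fin n → ℝ) × (Fin n → ℝ),
      r 0 p.1 τ w * r τ w 1 p.2 / r 0 p.1 1 p.2 * (r 0 p.1 1 p.2 * phihat0 p.1))
      = (∫ x, r 0 x τ w * phihat0 x) * ∫ y, r τ w 1 y := by
    have heq : ∀ p : (Fin n → ℝ) × (Fin n → ℝ),
        r 0 p.1 τ w * r τ w 1 p.2 / r 0 p.1 1 p.2 * (r 0 p.1 1 p.2 * phihat0 p.1)
        = (r 0 p.1 τ w * phihat0 p.1) * (r τ w 1 p.2) := by
      intro p
      have h := (hr_pos 0 p.1 1 p.2 le_rfl zero_le_one le_rfl).ne'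
      field_simp
    simp_rw [heq]
    exact integral_prod_mul (fun x => r 0 x τ w * phihat0 x) (fun y => r τ w 1 y)
  have h2 : (∫ t in τ..1, ∫ p : (Fin n → ℝ) × (Fin n → ℝ),
        r 0 p.1 τ w * r τ w t p.2 / r 0 p.1 t p.2 * (Λ t p.2 * V t p.2 * r 0 p.1 t p.2 * phihat0 p.1))
      = (∫ t in τ..1, ∫ z, Λ t z * V t z * r τ w t z) * ∫ x, r 0 x τ w * phihat0 x := by
    rw [← intervalIntegral.integral_mul_const]
    apply intervalIntegral.integral_congr
    intro t ht
    rw [Set.uIcc_of_le hτ1] at ht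
    have ht0 : (0:ℝ) ≤ t := le_trans hτ0 ht.1
    have heq : ∀ p : (Fin n → ℝ) × (Fin n → ℝ),
        r 0 p.1 τ w * r τ w t p.2 / r 0 p.1 t p.2 * (Λ t p.2 * V t p.2 * r 0 p.1 t p.2 * phihat0 p.1)
        = (Λ t p.2 * V t p.2 * r τ w t p.2) * (r 0 p.1 τ w * phihat0 p.1) := by
      intro p
      have h := (hr_pos 0 p.1 t p.2 le_rfl ht0 ht.2).ne'
      field_simp
    simp only [heq]
    rw [show (∫ p : (Fin n → ℝ) × (Fin n → ℝ),
        Λ t p.2 * V t p.2 * r τ w t p.2 * (r 0 p.1 τ w * phihat0 p.1))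
      = ∫ p : (Fin n → ℝ) × (Fin n → ℝ),
        (r 0 p.1 τ w * phihat0 p.1) * (Λ t p.2 * V t p.2 * r τ w t p.2) by
        congr 1; funext p; ring]
    rw [mul_comm (∫ z, Λ t z * V t z * r τ w t z)]
    exact integral_prod_mul (fun x => r 0 x τ w * phihat0 x)
      (fun z => Λ t z * V t z * r τ w t z)
  rw [h1, h2]
  ring
end

section
/- Let n ≥ 1 and let a : (0,1)×ℝⁿ → ℝ^{n×n} with a_{ij} = a_{ji}, b : (0,1)×ℝⁿ → ℝⁿ, V, Λ : (0,1)×ℝⁿ → ℝ, and φ, φ̂ : (0,1)×ℝⁿ → ℝ be functions such that φ and φ̂ are C¹ in time and C² in space, a is C² in space, b is C¹ in space, and φ(t,x) > 0 for all (t,x). Assume that for all (t,x): ∂_t φ = −∑_i b_i ∂_{x_i} φ − (1/2) ∑_{i,j} a_{ij} ∂²_{x_i x_j} φ + V φ − V Λ, and ∂_t φ̂ = −∑_i ∂_{x_i}(b_i φ̂) + (1/2) ∑_{i,j} ∂²_{x_i x_j}(a_{ij} φ̂) − V φ̂. Then P := φ φ̂ satisfies, for all (t,x): ∂_t P = −∑_i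 ∂_{x_i}( (b_i + ∑_j a_{ij} ∂_{x_j} log φ) P ) + (1/2) ∑_{i,j} ∂²_{x_i x_j}(a_{ij} P) − (Λ/φ) V P. -/
/-- Partial derivative of `f : ℝⁿ → ℝ` in the `i`-th coordinate direction. -/
noncomputable def pd {n : ℕ} (i : Fin n) (f : (Fin n → ℝ) → ℝ) (x : Fin n → ℝ) : ℝ :=
  fderiv ℝ f x (Pi.single i 1)

/-- Partial derivative in time of `f : (0,1) × ℝⁿ → ℝ` (time first). -/
noncomputable def pt {n : ℕ} (f : ℝ → (Fin n → ℝ) → ℝ) (t : ℝ) (x : Fin n → ℝ) : ℝ :=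
  deriv (fun s => f s x) t

lemma pd_mul {n : ℕ} (i : Fin n) {f g : (Fin n → ℝ) → ℝ} {x}
    (hf : DifferentiableAt ℝ f x) (hg : DifferentiableAt ℝ g x) :
    pd i (fun w => f w * g w) x = pd i f x * g x + f x * pd i g x := by
  unfold pd
  rw [fderiv_fun_mul hf hg]
  simp
  ring

lemma pd_add {n : ℕ} (i : Fin n) {f g : (Fin n → ℝ) → ℝ} {x}
    (hf : DifferentiableAt ℝ f x) (hg : DifferentiableAt ℝ g x) :
    pd i (fun w => f w + g w) x = pd i f x + pd i g x := by
  unfold pd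
  rw [fderiv_fun_add hf hg]
  simp

lemma pd_sum {n m : ℕ} (i : Fin n) {f : Fin m → (Fin n → ℝ) → ℝ} {x}
    (hf : ∀ j, DifferentiableAt ℝ (f j) x) :
    pd i (fun w => ∑ j, f j w) x = ∑ j, pd i (f j) x := by
  unfold pd
  rw [fderiv_fun_sum (fun j _ => hf j)]
  simp

lemma pd_log {n : ℕ} (i : Fin n) {f : (Fin n → ℝ) → ℝ} {x}
    (hf : DifferentiableAt ℝ f x) (hpos : 0 < f x) :
    pd i (fun w => Real.log (f w)) x = pd i f x / f x := by
  unfold pd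
  rw [(hf.hasFDerivAt.log hpos.ne').fderiv]
  simp
  ring

lemma differentiable_pd {n : ℕ} (i : Fin n) {f : (Fin n → ℝ) → ℝ}
    (hf : ContDiff ℝ 2 f) : Differentiable ℝ (pd i f) := by
  have h : Differentiable ℝ (fderiv ℝ f) :=
    (hf.fderiv_right (m := 1) (by norm_num)).differentiable one_ne_zero
  exact (ContinuousLinearMap.apply ℝ ℝ (Pi.single i 1)).differentiable.comp h

/-- PDE verification in Theorem 1(iii): if `φ > 0` solves the Kolmogorov backward equation
`∂_t φ = −b·∇φ − (1/2)∑ a_{ij} ∂²_{ij} φ + Vφ − VΛ` and `φ̂` solves the Kolmogorov forward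
(Fokker–Planck) equation `∂_t φ̂ = −∇·(bφ̂) + (1/2)∑ ∂²_{ij}(a_{ij} φ̂) − Vφ̂`, then
`P = φφ̂` solves the Fokker–Planck equation of the controlled process, whose drift is
updated by the feedback term `a∇log φ` and whose killing rate is rescaled to `(Λ/φ)V`. -/
theorem product_solves_controlled_FokkerPlanck
    (n : ℕ) (hn : 1 ≤ n)
    (a : ℝ → (Fin n → ℝ) → Fin n → Fin n → ℝ)
    (b : ℝ → (Fin n → ℝ) → Fin n → ℝ)
    (V Λ : ℝ → (Fin n → ℝ) → ℝ)
    (φ φh : ℝ → (Fin n → ℝ) → ℝ)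
    -- symmetry of the diffusion matrix:
    (ha_symm : ∀ t x i j, a t x i j = a t x j i)
    -- smoothness: φ and φ̂ are C¹ in time and C² in space, a is C² in space,
    -- b is C¹ in space:
    (hφ_time : ∀ x, ContDiffOn ℝ 1 (fun t => φ t x) (Set.Ioo (0:ℝ) 1))
    (hφh_time : ∀ x, ContDiffOn ℝ 1 (fun t => φh t x) (Set.Ioo (0:ℝ) 1))
    (hφ_space : ∀ t ∈ Set.Ioo (0:ℝ) 1, ContDiff ℝ 2 (φ t))
    (hφh_space : ∀ t ∈ Set.Ioo (0:ℝ) 1, ContDiff ℝ 2 (φh t))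
    (ha_space : ∀ t ∈ Set.Ioo (0:ℝ) 1, ∀ i j, ContDiff ℝ 2 (fun x => a t x i j))
    (hb_space : ∀ t ∈ Set.Ioo (0:ℝ) 1, ∀ i, ContDiff ℝ 1 (fun x => b t x i))
    -- positivity of the backward factor:
    (hφ_pos : ∀ t ∈ Set.Ioo (0:ℝ) 1, ∀ x, 0 < φ t x)
    -- the Kolmogorov backward equation with killing rate V and source VΛ:
    (hback : ∀ t ∈ Set.Ioo (0:ℝ) 1, ∀ x,
      pt φ t x = -(∑ i, b t x i * pd i (φ t) x)
        - (1/2) * ∑ i, ∑ j, a t x i j * pd i (pd j (φ t)) x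
        + V t x * φ t x - V t x * Λ t x)
    -- the Kolmogorov forward (Fokker–Planck) equation with killing rate V:
    (hfor : ∀ t ∈ Set.Ioo (0:ℝ) 1, ∀ x,
      pt φh t x = -(∑ i, pd i (fun w => b t w i * φh t w) x)
        + (1/2) * ∑ i, ∑ j, pd i (pd j (fun w => a t w i j * φh t w)) x
        - V t x * φh t x) :
    -- conclusion: P = φφ̂ solves the controlled Fokker–Planck equation
    ∀ t ∈ Set.Ioo (0:ℝ) 1, ∀ x,
      pt (fun s w => φ s w * φh s w) t x =
        -(∑ i, pd i (fun w =>
            (b t w i + ∑ j, a t w i j * pd j (fun v => Real.log (φ t v)) w)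
              * (φ t w * φh t w)) x)
        + (1/2) * ∑ i, ∑ j, pd i (pd j (fun w => a t w i j * (φ t w * φh t w))) x
        - (Λ t x / φ t x) * V t x * (φ t x * φh t x) := by
  intro t ht x
  have hφc := hφ_space t ht
  have hφhc := hφh_space t ht
  have dφ : Differentiable ℝ (φ t) := hφc.differentiable two_ne_zero
  have dφh : Differentiable ℝ (φh t) := hφhc.differentiable two_ne_zero
  have dpφ : ∀ j : Fin n, Differentiable ℝ (pd j (φ t)) :=
    fun j => differentiable_pd j hφc
  have hu : ∀ i j : Fin n, ContDiff ℝ 2 (fun w => a t w i j * φh t w) :=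
    fun i j => (ha_space t ht i j).mul hφhc
  have du : ∀ i j : Fin n, Differentiable ℝ (fun w => a t w i j * φh t w) :=
    fun i j => (hu i j).differentiable two_ne_zero
  have dpu : ∀ i j k : Fin n, Differentiable ℝ (pd k (fun w => a t w i j * φh t w)) :=
    fun i j k => differentiable_pd k (hu i j)
  have db : ∀ i : Fin n, Differentiable ℝ (fun w => b t w i) :=
    fun i => (hb_space t ht i).differentiable one_ne_zero
  have dbφh : ∀ i : Fin n, Differentiable ℝ (fun w => b t w i * φh t w) :=
    fun i => (db i).mul dφh
  -- time product rule
  have htime : pt (fun s w => φ s w * φh s w) t x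
      = pt φ t x * φh t x + φ t x * pt φh t x := by
    have h1 : DifferentiableAt ℝ (fun s => φ s x) t :=
      ((hφ_time x).contDiffAt (isOpen_Ioo.mem_nhds ht)).differentiableAt one_ne_zero
    have h2 : DifferentiableAt ℝ (fun s => φh s x) t :=
      ((hφh_time x).contDiffAt (isOpen_Ioo.mem_nhds ht)).differentiableAt one_ne_zero
    exact deriv_fun_mul h1 h2
  -- drift term expansion
  have hdrift : ∀ i : Fin n,
      pd i (fun w => (b t w i + ∑ j, a t w i j * pd j (fun v => Real.log (φ t v)) w)
          * (φ t w * φh t w)) x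
      = pd i (fun w => b t w i * φh t w) x * φ t x
        + b t x i * pd i (φ t) x * φh t x
        + ∑ j, (pd i (fun w => a t w i j * φh t w) x * pd j (φ t) x
            + a t x i j * pd i (pd j (φ t)) x * φh t x) := by
    intro i
    have hfun : (fun w => (b t w i + ∑ j, a t w i j * pd j (fun v => Real.log (φ t v)) w)
          * (φ t w * φh t w))
        = fun w => (b t w i * φh t w) * φ t w
            + ∑ j, (a t w i j * φh t w) * pd j (φ t) w := by
      funext w
      rw [add_mul, Finset.sum_mul]
      congr 1
      · ring
      · refine Finset.sum_congr rfl fun j _ => ?_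
        rw [pd_log j (dφ w) (hφ_pos t ht w)]
        have hne := (hφ_pos t ht w).ne'
        field_simp
    rw [hfun, pd_add i (((dbφh i).fun_mul dφ) x)
        ((Differentiable.fun_sum (fun j _ => (du i j).fun_mul (dpφ j))) x),
      pd_mul i (dbφh i x) (dφ x),
      pd_sum i (fun j => ((du i j).fun_mul (dpφ j)) x)]
    have hterm : ∀ j : Fin n,
        pd i (fun w => (a t w i j * φh t w) * pd j (φ t) w) x
        = pd i (fun w => a t w i j * φh t w) x * pd j (φ t) x
          + a t x i j * pd i (pd j (φ t)) x * φh t x := by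
      intro j
      rw [pd_mul i (du i j x) (dpφ j x)]
      ring
    rw [Finset.sum_congr rfl fun j _ => hterm j]
    ring
  -- second-order term expansion
  have hsecond : ∀ i j : Fin n,
      pd i (pd j (fun w => a t w i j * (φ t w * φh t w))) x
      = pd i (pd j (fun w => a t w i j * φh t w)) x * φ t x
        + pd j (fun w => a t w i j * φh t w) x * pd i (φ t) x
        + pd i (fun w => a t w i j * φh t w) x * pd j (φ t) x
        + a t x i j * pd i (pd j (φ t)) x * φh t x := by
    intro i j
    have hfun : pd j (fun w => a t w i j * (φ t w * φh t w))
        = fun w => pd j (fun v => a t v i j * φh t v) w * φ t w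
            + (a t w i j * φh t w) * pd j (φ t) w := by
      funext w
      have heq : (fun w => a t w i j * (φ t w * φh t w))
          = fun w => (a t w i j * φh t w) * φ t w := by
        funext v; ring
      rw [heq, pd_mul j (du i j w) (dφ w)]
    rw [hfun, pd_add i (((dpu i j j).fun_mul dφ) x) (((du i j).fun_mul (dpφ j)) x),
      pd_mul i (dpu i j j x) (dφ x), pd_mul i (du i j x) (dpφ j x)]
    ring
  -- symmetry of the mixed first-order terms
  have hsymm : ∑ i : Fin n, ∑ j : Fin n,
        pd j (fun w => a t w i j * φh t w) x * pd i (φ t) x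
      = ∑ i : Fin n, ∑ j : Fin n,
        pd i (fun w => a t w i j * φh t w) x * pd j (φ t) x := by
    rw [Finset.sum_comm]
    refine Finset.sum_congr rfl fun i _ => Finset.sum_congr rfl fun j _ => ?_
    have heq : (fun w => a t w j i * φh t w) = fun w => a t w i j * φh t w := by
      funext w; rw [ha_symm]
    rw [heq]
  -- killing term
  have hkill : Λ t x / φ t x * V t x * (φ t x * φh t x)
      = V t x * Λ t x * φh t x := by
    have hne := (hφ_pos t ht x).ne'
    field_simp
  rw [htime, hback t ht x, hfor t ht x,
    Finset.sum_congr rfl fun i _ => hdrift i,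
    Finset.sum_congr rfl fun i _ => Finset.sum_congr rfl fun j _ => hsecond i j,
    hkill]
  simp only [Finset.sum_add_distrib, ← Finset.sum_mul] at hsymm ⊢
  linear_combination (-1/2 : ℝ) * hsymm
end

section
/- Let n ≥ 1, let r(s,x,t,y) ≥ 0 be measurable for 0 ≤ s ≤ t ≤ 1 and x, y ∈ ℝⁿ, let V : [0,1]×ℝⁿ → [0,∞) and Q : ℝⁿ×[0,1] → [0,∞) be measurable, and let ρ₀ : ℝⁿ → [0,∞) be measurable. Suppose measurable nonnegative functions φ₀, φ̂₀ on ℝⁿ and Λ, Λ̂ on ℝⁿ×[0,1] satisfy the Schrödinger system: (i) φ₀(x) = ∫_{ℝⁿ} r(0,x,1,y) dy + ∫_0^1 ∫_{ℝⁿ} Λ(z,t) V(t,z) r(0,x,t,z) dz dt for all x; (ii) φ₀(x) φ̂₀(x) = ρ₀(x) for a.e. x; (iii) Λ̂(z,t) = V(t,z) ∫_{ℝⁿ} r(0,x,t,z) φ̂₀(x) dx for a.e. (z,t); (iv) Λ(z,t) Λ̂(z,t) = Q(z,t) for a.e. (z,t). Then the couplings π*_xy(x,y) := r(0,x,1,y)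 φ̂₀(x) and π*_xzt(x,z,t) := Λ(z,t) V(t,z) r(0,x,t,z) φ̂₀(x) satisfy the marginal constraints: ∫_{ℝⁿ} π*_xy(x,y) dy + ∫_0^1 ∫_{ℝⁿ} π*_xzt(x,z,t) dz dt = ρ₀(x) for a.e. x, and ∫_{ℝⁿ} π*_xzt(x,z,t) dx = Q(z,t) for a.e. (z,t). -/
open MeasureTheory

/-- Any solution of the Schrödinger system (15a)-(15f) associated with the spatio-temporal
bridge problem produces couplings `π*_xy(x,y) = r(0,x,1,y) φ̂₀(x)` and
`π*_xzt(x,z,t) = Λ(z,t) V(t,z) r(0,x,t,z) φ̂₀(x)` that are feasible for Problem 2,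
i.e., match both the initial marginal `ρ₀` and the spatio-temporal killing marginal `Q`. -/
theorem schroedinger_system_gives_feasible_couplings
    (n : ℕ) (hn : 1 ≤ n)
    (r : ℝ → (Fin n → ℝ) → ℝ → (Fin n → ℝ) → ℝ)
    (hr_meas : Measurable (fun p : ℝ × (Fin n → ℝ) × ℝ × (Fin n → ℝ) =>
      r p.1 p.2.1 p.2.2.1 p.2.2.2))
    (hr_nonneg : ∀ s x t y, 0 ≤ s → s ≤ t → t ≤ 1 → 0 ≤ r s x t y)
    (V : ℝ → (Fin n → ℝ) → ℝ)
    (hV_meas : Measurable (fun p : ℝ × (Fin n → ℝ) => V p.1 p.2))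
    (hV_nonneg : ∀ t z, 0 ≤ V t z)
    (Q : (Fin n → ℝ) × ℝ → ℝ) (hQ_meas : Measurable Q) (hQ_nonneg : ∀ p, 0 ≤ Q p)
    (ρ₀ : (Fin n → ℝ) → ℝ) (hρ₀_meas : Measurable ρ₀) (hρ₀_nonneg : ∀ x, 0 ≤ ρ₀ x)
    -- the restriction of Lebesgue measure on ℝⁿ × ℝ to the time window `[0,1]`:
    (mQ : Measure ((Fin n → ℝ) × ℝ))
    (hmQ : mQ = (volume : Measure ((Fin n → ℝ) × ℝ)).restrict {p | p.2 ∈ Set.Icc (0:ℝ) 1})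
    (φ₀ phihat0 : (Fin n → ℝ) → ℝ)
    (hφ₀_meas : Measurable φ₀) (hφ₀_nonneg : ∀ x, 0 ≤ φ₀ x)
    (hphihat0_meas : Measurable phihat0) (hphihat0_nonneg : ∀ x, 0 ≤ phihat0 x)
    (Λ Λhat : (Fin n → ℝ) × ℝ → ℝ)
    (hΛ_meas : Measurable Λ) (hΛ_nonneg : ∀ p, 0 ≤ Λ p)
    (hΛhat_meas : Measurable Λhat) (hΛhat_nonneg : ∀ p, 0 ≤ Λhat p)
    -- (i) the backward representation (FS1) at time 0:
    (hi : ∀ x, φ₀ x =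
      (∫ y, r 0 x 1 y) + ∫ t in (0:ℝ)..1, ∫ z, Λ (z, t) * V t z * r 0 x t z)
    -- (ii) the initial coupling condition (15a):
    (hii : ∀ᵐ x ∂(volume : Measure (Fin n → ℝ)), φ₀ x * phihat0 x = ρ₀ x)
    -- (iii) the forward representation (FS2)/(15f):
    (hiii : ∀ᵐ zt ∂mQ, Λhat zt = V zt.2 zt.1 * ∫ x, r 0 x zt.2 zt.1 * phihat0 x)
    -- (iv) the spatio-temporal coupling condition (15c):
    (hiv : ∀ᵐ zt ∂mQ, Λ zt * Λhat zt = Q zt) :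
    -- conclusion: the optimal-form couplings satisfy the two marginal constraints
    (∀ᵐ x ∂(volume : Measure (Fin n → ℝ)),
      (∫ y, r 0 x 1 y * phihat0 x)
        + (∫ t in (0:ℝ)..1, ∫ z, Λ (z, t) * V t z * r 0 x t z * phihat0 x) = ρ₀ x)
    ∧ (∀ᵐ zt ∂mQ,
        (∫ x, Λ zt * V zt.2 zt.1 * r 0 x zt.2 zt.1 * phihat0 x) = Q zt) := by
  constructor
  · filter_upwards [hii] with x hx
    have h1 : (∫ y, r 0 x 1 y * phihat0 x) = (∫ y, r 0 x 1 y) * phihat0 x :=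
      integral_mul_const _ _
    have h2 : (∫ t in (0:ℝ)..1, ∫ z, Λ (z, t) * V t z * r 0 x t z * phihat0 x)
        = (∫ t in (0:ℝ)..1, ∫ z, Λ (z, t) * V t z * r 0 x t z) * phihat0 x := by
      rw [← intervalIntegral.integral_mul_const]
      congr 1; funext t
      exact integral_mul_const _ _
    rw [h1, h2, ← add_mul, ← hi x, hx]
  · filter_upwards [hiii, hiv] with zt h3 h4
    have : (∫ x, Λ zt * V zt.2 zt.1 * r 0 x zt.2 zt.1 * phihat0 x)
        = Λ zt * V zt.2 zt.1 * ∫ x, r 0 x zt.2 zt.1 * phihat0 x := by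
      rw [← integral_const_mul]
      congr 1; funext x; ring
    rw [this, mul_assoc, ← h3, h4]
end
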